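/- arXiv:1004.1317 — 9 statements merged into one kernel-verified Lean document; each statement's English description precedes it below -/
import Mathlib

section
/- Let μ ≥ 1 and let p : Fin μ → ℝ satisfy 0 ≤ p i for all i and ∑ i, p i = 1. Let T be the real matrix indexed by (Fin μ) × (Fin μ) with entries T ((a,b),(c,d)) = Real.sqrt (p a * p b) if c = b and d = a, and 0 otherwise. Then T is Hermitian (symmetric), and the sum over all indices of the absolute values of its eigenvalues (counted with multiplicity, e.g. via Matrix.IsHermitian.eigenvalues) equals (∑ i, Real.sqrt (p i))². -/
open scoped BigOperators
open Polynomial Matrix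

lemma my_charpoly_conj {n : Type*} [Fintype n] [DecidableEq n] {R : Type*} [CommRing R]
    (U M V : Matrix n n R) (hUV : U * V = 1) :
    (U * M * V).charpoly = M.charpoly := by
  have hmap : ∀ A B : Matrix n n R,
      (C : R →+* R[X]).mapMatrix (A * B)
        = (C : R →+* R[X]).mapMatrix A * (C : R →+* R[X]).mapMatrix B :=
    fun A B => map_mul _ A B
  have h1 : charmatrix (U * M * V) =
      (C : R →+* R[X]).mapMatrix U * charmatrix M * (C : R →+* R[X]).mapMatrix V := by
    unfold charmatrix
    rw [mul_sub, sub_mul, hmap, hmap]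
    congr 1
    have hcomm : Matrix.scalar n (X : R[X]) * (C : R →+* R[X]).mapMatrix V
        = (C : R →+* R[X]).mapMatrix V * Matrix.scalar n (X : R[X]) :=
      (scalar_commute (X : R[X]) (fun r' => Commute.all _ _) _).eq
    rw [mul_assoc, hcomm, ← mul_assoc, ← hmap, hUV]
    simp
  have hUV' : (C : R →+* R[X]).mapMatrix U * (C : R →+* R[X]).mapMatrix V = 1 := by
    rw [← hmap, hUV]; simp
  have hdet : ((C : R →+* R[X]).mapMatrix U).det * ((C : R →+* R[X]).mapMatrix V).det = 1 := by
    rw [← det_mul, hUV', det_one]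
  rw [Matrix.charpoly, h1, det_mul, det_mul,
    show ∀ x y z : R[X], x * y * z = y * (x * z) from fun x y z => by ring, hdet, mul_one]
  rfl

lemma my_charpoly_diagonal {n : Type*} [Fintype n] [DecidableEq n] {R : Type*} [CommRing R]
    (d : n → R) : (Matrix.diagonal d).charpoly = ∏ i, (X - C (d i)) := by
  have h : charmatrix (Matrix.diagonal d) = Matrix.diagonal fun i => X - C (d i) := by
    ext i j
    by_cases hij : i = j
    · subst hij; simp [charmatrix_apply_eq]
    · rw [charmatrix_apply_ne _ _ _ hij, Matrix.diagonal_apply_ne _ hij,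
        Matrix.diagonal_apply_ne _ hij]
      simp
  rw [Matrix.charpoly, h, det_diagonal]

theorem negativity_pure_state_trace_norm
    (μ : ℕ) (hμ : 1 ≤ μ) (p : Fin μ → ℝ)
    (hp : ∀ i, 0 ≤ p i) (hsum : ∑ i, p i = 1)
    (T : Matrix (Fin μ × Fin μ) (Fin μ × Fin μ) ℝ)
    (hT : ∀ a b c d : Fin μ,
      T (a, b) (c, d) = if c = b ∧ d = a then Real.sqrt (p a * p b) else 0) :
    ∃ h : T.IsHermitian,
      ∑ i, |h.eigenvalues i| = (∑ i, Real.sqrt (p i)) ^ 2 := by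
  have hT' : ∀ (a b : Fin μ) (x : Fin μ × Fin μ),
      T (a, b) x = if x = (b, a) then Real.sqrt (p a * p b) else 0 := by
    rintro a b ⟨c, d⟩
    rw [hT]
    simp [Prod.ext_iff]
  -- Hermitian
  have hherm : T.IsHermitian := by
    ext ⟨a, b⟩ ⟨c, d⟩
    rw [Matrix.conjTranspose_apply, hT, hT, star_trivial]
    by_cases h : c = b ∧ d = a
    · obtain ⟨h1, h2⟩ := h
      subst h1; subst h2
      rw [if_pos ⟨rfl, rfl⟩, if_pos ⟨rfl, rfl⟩, mul_comm]
    · rw [if_neg h, if_neg fun hc => h ⟨hc.2.symm, hc.1.symm⟩]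
  refine ⟨hherm, ?_⟩
  -- T * T is diagonal
  have hT2 : T * T = Matrix.diagonal (fun i : Fin μ × Fin μ => p i.1 * p i.2) := by
    ext ⟨a, b⟩ ⟨c, d⟩
    rw [Matrix.mul_apply]
    have : ∀ x : Fin μ × Fin μ, T (a, b) x * T x (c, d)
        = if x = (b, a) then Real.sqrt (p a * p b) * T (b, a) (c, d) else 0 := by
      intro x
      rw [hT']
      split_ifs with h
      · subst h; rfl
      · exact zero_mul _
    rw [Finset.sum_congr rfl fun x _ => this x, Finset.sum_ite_eq' Finset.univ (b, a)]
    simp only [Finset.mem_univ, if_true, hT]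
    rw [Matrix.diagonal_apply]
    by_cases h : c = a ∧ d = b
    · obtain ⟨h1, h2⟩ := h
      subst h1; subst h2
      rw [if_pos ⟨rfl, rfl⟩, if_pos rfl, mul_comm (p d) (p c)]
      exact Real.mul_self_sqrt (mul_nonneg (hp c) (hp d))
    · rw [if_neg h, mul_zero,
        if_neg fun hc => h ⟨(congrArg Prod.fst hc).symm, (congrArg Prod.snd hc).symm⟩]
  -- spectral theorem gives charpoly of T*T
  set ev := hherm.eigenvalues with hev
  have hst := hherm.spectral_theorem
  set U : Matrix (Fin μ × Fin μ) (Fin μ × Fin μ) ℝ :=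
    ((hherm.eigenvectorUnitary : Matrix.unitaryGroup (Fin μ × Fin μ) ℝ) :
      Matrix (Fin μ × Fin μ) (Fin μ × Fin μ) ℝ) with hU
  have hdiag : Matrix.diagonal ((RCLike.ofReal : ℝ → ℝ) ∘ ev) = Matrix.diagonal ev := by
    congr 1
  have hUU : U * star U = 1 := Matrix.mem_unitaryGroup_iff.mp hherm.eigenvectorUnitary.2
  have hUU' : star U * U = 1 := Matrix.mem_unitaryGroup_iff'.mp hherm.eigenvectorUnitary.2
  have hTT : T * T = U * Matrix.diagonal (fun i => ev i * ev i) * star U := by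
    conv_lhs => rw [hst]
    rw [hdiag]
    rw [Unitary.conjStarAlgAut_apply, ← hU]
    rw [show (U * Matrix.diagonal ev * star U) * (U * Matrix.diagonal ev * star U)
        = U * (Matrix.diagonal ev * (star U * U) * Matrix.diagonal ev) * star U by
      noncomm_ring]
    rw [hUU', mul_one, Matrix.diagonal_mul_diagonal]
  have hchar : (∏ i : Fin μ × Fin μ, (X - C (ev i * ev i)))
      = ∏ i : Fin μ × Fin μ, (X - C (p i.1 * p i.2)) := by
    rw [← my_charpoly_diagonal, ← my_charpoly_diagonal, ← hT2, hTT,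
      my_charpoly_conj _ _ _ hUU]
  -- multiset of roots
  have eroots : ∀ f : Fin μ × Fin μ → ℝ,
      (∏ i, (X - C (f i))).roots = Finset.univ.val.map f := by
    intro f
    rw [Finset.prod_eq_multiset_prod,
      show (Multiset.map (fun i => X - C (f i)) Finset.univ.val)
        = Multiset.map (fun a : ℝ => X - C a) (Multiset.map f Finset.univ.val) from
        (Multiset.map_map (fun a : ℝ => X - C a) f Finset.univ.val).symm]
    exact roots_multiset_prod_X_sub_C _
  have hroots : (Finset.univ.val.map fun i : Fin μ × Fin μ => ev i * ev i)
      = Finset.univ.val.map fun i : Fin μ × Fin μ => p i.1 * p i.2 := by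
    rw [← eroots, ← eroots, hchar]
  -- conclude
  have lsum : ∀ f : Fin μ × Fin μ → ℝ,
      (∑ i, Real.sqrt (f i)) = ((Finset.univ.val.map f).map Real.sqrt).sum := by
    intro f; rw [Multiset.map_map]; rfl
  have key : ∑ i : Fin μ × Fin μ, Real.sqrt (ev i * ev i)
      = ∑ i : Fin μ × Fin μ, Real.sqrt (p i.1 * p i.2) := by
    rw [lsum, lsum, hroots]
  calc ∑ i, |ev i| = ∑ i : Fin μ × Fin μ, Real.sqrt (ev i * ev i) := by
        refine Finset.sum_congr rfl fun i _ => ?_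
        rw [← Real.sqrt_mul_self_eq_abs]
    _ = ∑ i : Fin μ × Fin μ, Real.sqrt (p i.1 * p i.2) := key
    _ = (∑ i, Real.sqrt (p i)) ^ 2 := by
        rw [Fintype.sum_prod_type]
        have hmul : ∀ a : Fin μ, ∑ b, Real.sqrt (p a * p b)
            = Real.sqrt (p a) * ∑ b, Real.sqrt (p b) := by
          intro a
          rw [Finset.mul_sum]
          exact Finset.sum_congr rfl fun b _ => Real.sqrt_mul (hp a) (p b)
        rw [Finset.sum_congr rfl fun a _ => hmul a, ← Finset.sum_mul, sq]
end

section
/- Let μ ≥ 1, let s ≥ 0 be real, and let f : (Fin μ → ℝ) → ℝ be continuous and positively homogeneous of degree s, i.e. f (r • q) = r^s * f q for every r > 0 and every q with 0 ≤ q i for all i. Then ∫_{q ∈ (0,∞)^μ} f q · exp (−∑ i, q i) dq = Real.Gamma (s + μ) · ∫_{x ∈ D_μ} f (p x) dx, where both integrals are with respect to Lebesgue measure of the appropriate dimension. -/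
open scoped BigOperators

/-- The simplex domain `D_μ`: points `x : Fin (μ-1) → ℝ` with positive coordinates
summing to less than 1. -/
def Dset (μ : ℕ) : Set (Fin (μ - 1) → ℝ) :=
  {x | (∀ i, 0 < x i) ∧ ∑ i, x i < 1}

/-- Extension of `x : Fin (μ-1) → ℝ` to a point of the probability simplex in `Fin μ → ℝ`,
the last coordinate being `1 - ∑ i, x i`. -/
noncomputable def pExt (μ : ℕ) (x : Fin (μ - 1) → ℝ) : Fin μ → ℝ :=
  fun i => if h : (i : ℕ) < μ - 1 then x ⟨i, h⟩ else 1 - ∑ j, x j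

open MeasureTheory Set


noncomputable section SimplexCOV
variable (n : ℕ)

def lastProj : (Fin (n+1) → ℝ) →L[ℝ] ℝ := ContinuousLinearMap.proj (Fin.last n)

def Wmap : (Fin (n+1) → ℝ) →L[ℝ] (Fin (n+1) → ℝ) :=
  ContinuousLinearMap.pi (fun i => if (i:ℕ) < n then ContinuousLinearMap.proj i else 0)

def wAff (q : Fin (n+1) → ℝ) : Fin (n+1) → ℝ := Wmap n q + Pi.single (Fin.last n) 1

def sumCast : (Fin (n+1) → ℝ) →L[ℝ] ℝ :=
  ∑ j : Fin n, ContinuousLinearMap.proj (Fin.castSucc j)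

def Lshear : (Fin (n+1) → ℝ) →L[ℝ] (Fin (n+1) → ℝ) :=
  ContinuousLinearMap.id ℝ _ - (sumCast n).smulRight (Pi.single (Fin.last n) 1)

def Phi (q : Fin (n+1) → ℝ) : Fin (n+1) → ℝ := Lshear n (lastProj n q • wAff n q)

def Amap (q : Fin (n+1) → ℝ) : (Fin (n+1) → ℝ) →L[ℝ] (Fin (n+1) → ℝ) :=
  (Lshear n).comp (lastProj n q • Wmap n + (lastProj n).smulRight (wAff n q))

lemma Wmap_apply (x : Fin (n+1) → ℝ) (i : Fin (n+1)) :
    Wmap n x i = if (i:ℕ) < n then x i else 0 := by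
  simp only [Wmap, ContinuousLinearMap.pi_apply]
  split <;> simp_all [ContinuousLinearMap.proj_apply]

lemma wAff_apply (q : Fin (n+1) → ℝ) (i : Fin (n+1)) :
    wAff n q i = if (i:ℕ) < n then q i else 1 := by
  simp only [wAff, Pi.add_apply, Wmap_apply, Pi.single_apply]
  rcases lt_or_ge (i:ℕ) n with h | h
  · have : i ≠ Fin.last n := by
      intro e; rw [e] at h; simp at h
    simp [h, this]
  · have : i = Fin.last n := Fin.eq_last_of_not_lt (by omega)
    simp [this]

lemma Lshear_apply (x : Fin (n+1) → ℝ) (i : Fin (n+1)) :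
    Lshear n x i = x i - (∑ j : Fin n, x (Fin.castSucc j)) * (Pi.single (Fin.last n) 1 : Fin (n+1) → ℝ) i := by
  simp [Lshear, sumCast, ContinuousLinearMap.smulRight_apply, ContinuousLinearMap.sum_apply,
    ContinuousLinearMap.proj_apply, smul_eq_mul]

lemma hasFDerivAt_Phi (q : Fin (n+1) → ℝ) : HasFDerivAt (Phi n) (Amap n q) q := by
  have hw : HasFDerivAt (wAff n) (Wmap n) q := (Wmap n).hasFDerivAt.add_const _
  have hc : HasFDerivAt (fun q => lastProj n q) (lastProj n) q := (lastProj n).hasFDerivAt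
  have hin : HasFDerivAt (fun q => lastProj n q • wAff n q)
      (lastProj n q • Wmap n + (lastProj n).smulRight (wAff n q)) q := hc.smul hw
  exact (Lshear n).hasFDerivAt.comp q hin

lemma det_Lshear :
    LinearMap.det ((Lshear n : (Fin (n+1) → ℝ) →L[ℝ] (Fin (n+1) → ℝ)) :
      (Fin (n+1) → ℝ) →ₗ[ℝ] (Fin (n+1) → ℝ)) = 1 := by
  rw [← LinearMap.det_toMatrix']
  set M := LinearMap.toMatrix' ((Lshear n : (Fin (n+1) → ℝ) →L[ℝ] (Fin (n+1) → ℝ)) :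
      (Fin (n+1) → ℝ) →ₗ[ℝ] (Fin (n+1) → ℝ)) with hM
  have hMapp : ∀ i j, M i j = (if i = j then 1 else 0)
      - (if j = Fin.last n then (0:ℝ) else 1) * (Pi.single (Fin.last n) 1 : Fin (n+1) → ℝ) i := by
    intro i j
    rw [hM, LinearMap.toMatrix'_apply]
    rw [ContinuousLinearMap.coe_coe, Lshear_apply]
    have hsum : (∑ j' : Fin n, if Fin.castSucc j' = j then (1:ℝ) else 0)
        = if j = Fin.last n then 0 else 1 := by
      rcases eq_or_ne j (Fin.last n) with h | h
      · subst h
        rw [if_pos rfl, Finset.sum_eq_zero]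
        intro j' _
        simp [(Fin.castSucc_lt_last j').ne]
      · obtain ⟨j', rfl⟩ := Fin.exists_castSucc_eq.2 h
        rw [if_neg h, Finset.sum_eq_single j']
        · simp
        · intro b _ hb
          simp [Fin.castSucc_inj, hb]
        · simp
    simp only [Pi.single_apply]
    rw [hsum]
  have htri : M.BlockTriangular OrderDual.toDual := by
    intro i j hij
    have hij' : i < j := hij
    have hine : i ≠ j := hij'.ne
    have hlast : i ≠ Fin.last n := by
      intro e
      exact absurd (e ▸ hij') (by simp [Fin.lt_iff_val_lt_val, Fin.le_last, not_lt.2 (Fin.le_last j)])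
    rw [hMapp, Pi.single_apply, if_neg hlast]
    simp [hine]
  rw [Matrix.det_of_lowerTriangular M htri]
  apply Finset.prod_eq_one
  intro i _
  rw [hMapp, Pi.single_apply]
  rcases eq_or_ne i (Fin.last n) with h | h
  · simp [h]
  · simp [h]

lemma det_inner (q : Fin (n+1) → ℝ) :
    LinearMap.det ((lastProj n q • Wmap n + (lastProj n).smulRight (wAff n q) :
      (Fin (n+1) → ℝ) →L[ℝ] (Fin (n+1) → ℝ)) : (Fin (n+1) → ℝ) →ₗ[ℝ] (Fin (n+1) → ℝ))
      = q (Fin.last n) ^ n := by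
  set r := q (Fin.last n) with hr
  set M := LinearMap.toMatrix' ((lastProj n q • Wmap n + (lastProj n).smulRight (wAff n q) :
      (Fin (n+1) → ℝ) →L[ℝ] (Fin (n+1) → ℝ)) : (Fin (n+1) → ℝ) →ₗ[ℝ] (Fin (n+1) → ℝ)) with hM
  rw [← LinearMap.det_toMatrix', ← hM]
  have hMapp : ∀ i j, M i j = r * (if (i:ℕ) < n then (if i = j then (1:ℝ) else 0) else 0)
      + (if Fin.last n = j then 1 else 0) * wAff n q i := by
    intro i j
    rw [hM, LinearMap.toMatrix'_apply]
    simp only [ContinuousLinearMap.coe_coe, ContinuousLinearMap.add_apply, Pi.add_apply,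
      ContinuousLinearMap.coe_smul', Pi.smul_apply, ContinuousLinearMap.smulRight_apply,
      Wmap_apply, lastProj, ContinuousLinearMap.proj_apply, smul_eq_mul, Pi.single_apply, hr]
  rw [Matrix.det_succ_row M (Fin.last n), Finset.sum_eq_single (Fin.last n)]
  · have h1 : M (Fin.last n) (Fin.last n) = 1 := by
      rw [hMapp]
      simp [wAff_apply]
    rw [h1, Fin.succAbove_last]
    have h2 : M.submatrix Fin.castSucc Fin.castSucc = r • (1 : Matrix (Fin n) (Fin n) ℝ) := by
      ext i' j'
      rw [Matrix.submatrix_apply, hMapp]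
      have hi : ((Fin.castSucc i') : ℕ) < n := i'.isLt
      have hl : Fin.last n ≠ Fin.castSucc j' := (Fin.castSucc_lt_last j').ne'
      rw [if_pos hi, if_neg hl]
      simp [Matrix.one_apply, Fin.castSucc_inj]
    rw [h2]
    have hsgn : ((-1:ℝ)) ^ ((Fin.last n : ℕ) + (Fin.last n : ℕ)) = 1 := by
      rw [Fin.val_last, show n + n = 2*n by ring, pow_mul]
      norm_num
    rw [hsgn]
    simp [Matrix.det_smul]
  · intro j _ hj
    have h0 : M (Fin.last n) j = 0 := by
      rw [hMapp]
      have hn : ¬ ((Fin.last n : ℕ) < n) := by simp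
      rw [if_neg hn, if_neg (fun h => hj h.symm)]
      ring
    rw [h0]
    ring
  · simp

lemma det_Amap (q : Fin (n+1) → ℝ) : (Amap n q).det = q (Fin.last n) ^ n := by
  have h : (Amap n q).det = LinearMap.det ((Amap n q :
      (Fin (n+1) → ℝ) →L[ℝ] (Fin (n+1) → ℝ)) : (Fin (n+1) → ℝ) →ₗ[ℝ] (Fin (n+1) → ℝ)) := rfl
  rw [h, Amap, ContinuousLinearMap.toLinearMap_comp, LinearMap.det_comp, det_Lshear, det_inner, one_mul]


lemma lastProj_apply (q : Fin (n+1) → ℝ) : lastProj n q = q (Fin.last n) := rfl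

lemma Phi_castSucc (q : Fin (n+1) → ℝ) (j : Fin n) :
    Phi n q (Fin.castSucc j) = q (Fin.last n) * q (Fin.castSucc j) := by
  rw [Phi, Lshear_apply]
  have h1 : (Pi.single (Fin.last n) 1 : Fin (n+1) → ℝ) (Fin.castSucc j) = 0 := by
    rw [Pi.single_apply, if_neg (Fin.castSucc_lt_last j).ne]
  rw [h1, mul_zero, sub_zero, Pi.smul_apply, smul_eq_mul, wAff_apply,
    if_pos (show ((Fin.castSucc j : Fin (n+1)) : ℕ) < n by simpa using j.isLt), lastProj_apply]

lemma Phi_last (q : Fin (n+1) → ℝ) :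
    Phi n q (Fin.last n) = q (Fin.last n) * (1 - ∑ j : Fin n, q (Fin.castSucc j)) := by
  rw [Phi, Lshear_apply]
  have h1 : (Pi.single (Fin.last n) 1 : Fin (n+1) → ℝ) (Fin.last n) = 1 := by
    rw [Pi.single_apply, if_pos rfl]
  have h3 : ∀ j : Fin n, (lastProj n q • wAff n q) (Fin.castSucc j)
      = q (Fin.last n) * q (Fin.castSucc j) := by
    intro j
    rw [Pi.smul_apply, smul_eq_mul, wAff_apply,
      if_pos (show ((Fin.castSucc j : Fin (n+1)) : ℕ) < n by simpa using j.isLt), lastProj_apply]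
  rw [Finset.sum_congr rfl (fun j _ => h3 j), h1, mul_one, Pi.smul_apply, smul_eq_mul,
    wAff_apply, lastProj_apply]
  have h2 : ¬ ((Fin.last n : ℕ) < n) := by simp
  rw [if_neg h2, mul_one, ← Finset.mul_sum]
  ring

lemma sum_Phi (q : Fin (n+1) → ℝ) : ∑ i, Phi n q i = q (Fin.last n) := by
  rw [Fin.sum_univ_castSucc]
  rw [Finset.sum_congr rfl (fun j _ => Phi_castSucc n q j), Phi_last, ← Finset.mul_sum]
  ring

lemma injOn_Phi : Set.InjOn (Phi n) {q | 0 < q (Fin.last n)} := by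
  intro a ha b hb h
  have hr : a (Fin.last n) = b (Fin.last n) := by
    rw [← sum_Phi n a, ← sum_Phi n b, h]
  have hb0 : b (Fin.last n) ≠ 0 := ne_of_gt (hr ▸ ha)
  funext i
  refine Fin.lastCases hr (fun j => ?_) i
  have h2 := congrFun h (Fin.castSucc j)
  rw [Phi_castSucc, Phi_castSucc, hr] at h2
  exact mul_left_cancel₀ hb0 h2

lemma Phi_image :
    Phi n '' {q | 0 < q (Fin.last n) ∧ (∀ j : Fin n, 0 < q (Fin.castSucc j))
        ∧ ∑ j : Fin n, q (Fin.castSucc j) < 1}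
      = {y : Fin (n+1) → ℝ | ∀ i, 0 < y i} := by
  ext y
  constructor
  · rintro ⟨q, ⟨hr, hx, hs⟩, rfl⟩
    intro i
    refine Fin.lastCases ?_ (fun j => ?_) i
    · rw [Phi_last]; exact mul_pos hr (by linarith)
    · rw [Phi_castSucc]; exact mul_pos hr (hx j)
  · intro hy
    set R := ∑ i, y i with hR
    have hRpos : 0 < R := Finset.sum_pos (fun i _ => hy i) Finset.univ_nonempty
    have hsum : ∑ j : Fin n, y (Fin.castSucc j) / R = (∑ j : Fin n, y (Fin.castSucc j)) / R :=
      (Finset.sum_div _ _ _).symm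
    have hRsplit : R = (∑ j : Fin n, y (Fin.castSucc j)) + y (Fin.last n) := by
      rw [hR, Fin.sum_univ_castSucc]
    refine ⟨Fin.snoc (fun j => y (Fin.castSucc j) / R) R, ⟨?_, ?_, ?_⟩, ?_⟩
    · simpa using hRpos
    · intro j
      simp only [Fin.snoc_castSucc]
      exact div_pos (hy _) hRpos
    · simp only [Fin.snoc_castSucc]
      rw [hsum, div_lt_one hRpos, hRsplit]
      have := hy (Fin.last n); linarith
    · funext i
      refine Fin.lastCases ?_ (fun j => ?_) i
      · rw [Phi_last]
        simp only [Fin.snoc_last, Fin.snoc_castSucc]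
        rw [hsum]
        field_simp
        linarith [hRsplit]
      · rw [Phi_castSucc]
        simp only [Fin.snoc_last, Fin.snoc_castSucc]
        field_simp

end SimplexCOV


noncomputable section MoreAux
variable (n : ℕ)

lemma Phi_eq (q : Fin (n+1) → ℝ) :
    Phi n q = q (Fin.last n) • pExt (n+1) (fun j : Fin n => q (Fin.castSucc j)) := by
  funext i
  rw [Pi.smul_apply, smul_eq_mul]
  refine Fin.lastCases ?_ (fun j => ?_) i
  · rw [Phi_last, pExt, dif_neg (show ¬ ((Fin.last n : ℕ) < n+1-1) by simp)]
    rfl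
  · rw [Phi_castSucc, pExt]
    have h : ((Fin.castSucc j : Fin (n+1)) : ℕ) < n + 1 - 1 := by simpa using j.isLt
    rw [dif_pos h]
    have h2 : (⟨((Fin.castSucc j : Fin (n+1)) : ℕ), h⟩ : Fin n) = j := Fin.ext (by simp)
    congr 1

lemma pExt_nonneg (x : Fin n → ℝ) (hx : ∀ j, 0 < x j) (hs : ∑ j, x j < 1) :
    ∀ i, 0 ≤ pExt (n+1) x i := by
  intro i
  rw [pExt]
  split
  · exact (hx _).le
  · show (0:ℝ) ≤ 1 - ∑ j : Fin n, x j
    linarith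

end MoreAux

theorem simplex_to_orthant_change_of_variables
    (μ : ℕ) (hμ : 1 ≤ μ) (s : ℝ) (hs : 0 ≤ s)
    (f : (Fin μ → ℝ) → ℝ) (hf : Continuous f)
    (hhom : ∀ r : ℝ, 0 < r → ∀ q : Fin μ → ℝ, (∀ i, 0 ≤ q i) →
      f (r • q) = r ^ s * f q) :
    ∫ q in {q : Fin μ → ℝ | ∀ i, 0 < q i}, f q * Real.exp (-∑ i, q i)
      = Real.Gamma (s + μ) * ∫ x in Dset μ, f (pExt μ x) := by
  obtain ⟨n, rfl⟩ : ∃ n, μ = n + 1 := ⟨μ - 1, (Nat.succ_pred_eq_of_pos hμ).symm⟩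
  have hn0 : (0:ℝ) ≤ (n:ℝ) := Nat.cast_nonneg n
  have hTmeas : MeasurableSet {x : Fin n → ℝ | (∀ j, 0 < x j) ∧ ∑ j, x j < 1} := by
    have h0 : {x : Fin n → ℝ | (∀ j, 0 < x j) ∧ ∑ j, x j < 1}
        = {x : Fin n → ℝ | ∀ j, 0 < x j} ∩ {x : Fin n → ℝ | ∑ j, x j < 1} := rfl
    rw [h0]
    apply MeasurableSet.inter
    · rw [Set.setOf_forall]
      exact MeasurableSet.iInter fun j =>
        measurableSet_lt measurable_const (measurable_pi_apply j)
    · exact measurableSet_lt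
        (Finset.measurable_sum _ fun j _ => measurable_pi_apply j) measurable_const
  have he : ∀ q : Fin (n+1) → ℝ,
      MeasurableEquiv.piFinSuccAbove (fun _ : Fin (n+1) => ℝ) (Fin.last n) q
        = (q (Fin.last n), fun j => q (Fin.castSucc j)) := by
    intro q
    rw [show (MeasurableEquiv.piFinSuccAbove (fun _ : Fin (n+1) => ℝ) (Fin.last n) q)
      = (q (Fin.last n), fun j => q ((Fin.last n).succAbove j)) from rfl, Fin.succAbove_last]
  have hSpre : {q : Fin (n+1) → ℝ | 0 < q (Fin.last n) ∧ (∀ j : Fin n, 0 < q (Fin.castSucc j))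
        ∧ ∑ j : Fin n, q (Fin.castSucc j) < 1}
      = (MeasurableEquiv.piFinSuccAbove (fun _ : Fin (n+1) => ℝ) (Fin.last n)) ⁻¹'
        (Set.Ioi (0:ℝ) ×ˢ {x : Fin n → ℝ | (∀ j, 0 < x j) ∧ ∑ j, x j < 1}) := by
    ext q
    simp only [Set.mem_preimage, he, Set.mem_prod, Set.mem_Ioi, Set.mem_setOf_eq]
  have hSmeas : MeasurableSet {q : Fin (n+1) → ℝ | 0 < q (Fin.last n)
      ∧ (∀ j : Fin n, 0 < q (Fin.castSucc j)) ∧ ∑ j : Fin n, q (Fin.castSucc j) < 1} := by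
    rw [hSpre]
    exact (MeasurableEquiv.piFinSuccAbove (fun _ : Fin (n+1) => ℝ) (Fin.last n)).measurable
      (measurableSet_Ioi.prod hTmeas)
  rw [(Phi_image n).symm, integral_image_eq_integral_abs_det_fderiv_smul volume hSmeas
    (fun q _ => (hasFDerivAt_Phi n q).hasFDerivWithinAt)
    ((injOn_Phi n).mono fun q hq => hq.1)]
  have hcongr : Set.EqOn
      (fun q => |(Amap n q).det| • (f (Phi n q) * Real.exp (-∑ i, Phi n q i)))
      (fun q => (q (Fin.last n) ^ (s + (n:ℝ)) * Real.exp (-(q (Fin.last n))))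
        * f (pExt (n+1) (fun j => q (Fin.castSucc j))))
      {q : Fin (n+1) → ℝ | 0 < q (Fin.last n) ∧ (∀ j : Fin n, 0 < q (Fin.castSucc j))
        ∧ ∑ j : Fin n, q (Fin.castSucc j) < 1} := by
    intro q hq
    obtain ⟨hr, hx, hs1⟩ := hq
    have hfq : f (Phi n q)
        = q (Fin.last n) ^ s * f (pExt (n+1) (fun j => q (Fin.castSucc j))) := by
      rw [Phi_eq]
      exact hhom _ hr _ (pExt_nonneg n _ hx hs1)
    simp only [smul_eq_mul, det_Amap, sum_Phi, hfq]
    rw [abs_of_nonneg (pow_nonneg hr.le n), Real.rpow_add hr, Real.rpow_natCast]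
    ring
  rw [setIntegral_congr_fun hSmeas hcongr]
  have hF : (fun q : Fin (n+1) → ℝ =>
        (q (Fin.last n) ^ (s + (n:ℝ)) * Real.exp (-(q (Fin.last n))))
          * f (pExt (n+1) (fun j => q (Fin.castSucc j))))
      = fun q => ((fun z : ℝ × (Fin n → ℝ) =>
          (z.1 ^ (s + (n:ℝ)) * Real.exp (-z.1)) * f (pExt (n+1) z.2))
        (MeasurableEquiv.piFinSuccAbove (fun _ : Fin (n+1) => ℝ) (Fin.last n) q)) := by
    funext q
    rw [he]
    rfl
  rw [hF, hSpre,
    (volume_preserving_piFinSuccAbove (fun _ : Fin (n+1) => ℝ)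
      (Fin.last n)).setIntegral_preimage_emb (MeasurableEquiv.measurableEmbedding _)
      (fun z : ℝ × (Fin n → ℝ) => (z.1 ^ (s + (n:ℝ)) * Real.exp (-z.1)) * f (pExt (n+1) z.2))
      (Set.Ioi (0:ℝ) ×ˢ {x : Fin n → ℝ | (∀ j, 0 < x j) ∧ ∑ j, x j < 1})]
  rw [Measure.volume_eq_prod, ← Measure.prod_restrict]
  rw [integral_prod_mul (fun r : ℝ => r ^ (s + (n:ℝ)) * Real.exp (-r))
    (fun x : Fin n → ℝ => f (pExt (n+1) x))]
  have hΓ : ∫ r in Set.Ioi (0:ℝ), r ^ (s + (n:ℝ)) * Real.exp (-r)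
      = Real.Gamma (s + ((n:ℝ) + 1)) := by
    rw [Real.Gamma_eq_integral (by linarith)]
    apply setIntegral_congr_fun measurableSet_Ioi
    intro r hr
    have h1 : s + ((n:ℝ) + 1) - 1 = s + n := by ring
    simp only [h1]
    ring
  rw [hΓ]
  have hDT : (∫ x in {x : Fin n → ℝ | (∀ j, 0 < x j) ∧ ∑ j, x j < 1}, f (pExt (n+1) x))
      = ∫ x in Dset (n+1), f (pExt (n+1) x) := rfl
  rw [hDT]
  push_cast
  ring
end

section
/- For every μ ≥ 1, ∫_{q ∈ (0,∞)^μ} (∏_{i < j} (q i − q j)²) · exp (−∑ k, q k) dq = μ! · ∏_{k=0}^{μ−1} (k!)², where the integral is with respect to μ-dimensional Lebesgue measure over the positive orthant. -/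
open scoped BigOperators

open MeasureTheory Finset

/-! ### One-dimensional integral facts -/

lemma gIntegrableOn (n : ℕ) :
    MeasureTheory.IntegrableOn (fun x : ℝ => x ^ n * Real.exp (-x)) (Set.Ioi 0) := by
  have h := Real.GammaIntegral_convergent (s := (n : ℝ) + 1) (by positivity)
  refine h.congr_fun (fun x hx => ?_) measurableSet_Ioi
  rw [add_sub_cancel_right]; simp only [Real.rpow_natCast]; rw [mul_comm]

lemma gIntegral (n : ℕ) :
    ∫ x in Set.Ioi (0:ℝ), x ^ n * Real.exp (-x) = (n.factorial : ℝ) := by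
  rw [← Real.Gamma_nat_eq_factorial,
    Real.Gamma_eq_integral (by positivity : (0:ℝ) < (n : ℝ) + 1)]
  refine MeasureTheory.setIntegral_congr_fun measurableSet_Ioi (fun x hx => ?_)
  rw [add_sub_cancel_right]; simp only [Real.rpow_natCast]; rw [mul_comm]

/-! ### Combinatorics: Vandermonde identity for binomial coefficients -/

lemma choose_sum_eq (i j μ : ℕ) (hj : j < μ) :
    ∑ k ∈ Finset.range μ, i.choose k * j.choose k = (i + j).choose j := by
  calc ∑ k ∈ Finset.range μ, i.choose k * j.choose k
      = ∑ k ∈ Finset.range (j + 1), i.choose k * j.choose k := by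
        refine (Finset.sum_subset (Finset.range_subset_range.2 hj) ?_).symm
        intro k hk hk'
        have : j < k := by
          simpa using hk'
        rw [Nat.choose_eq_zero_of_lt this, mul_zero]
    _ = ∑ k ∈ Finset.range (j + 1), i.choose k * j.choose (j - k) := by
        refine Finset.sum_congr rfl (fun k hk => ?_)
        rw [Nat.choose_symm (Nat.lt_succ_iff.mp (Finset.mem_range.mp hk))]
    _ = (i + j).choose j := by
        rw [Nat.add_choose_eq i j j,
          Finset.Nat.sum_antidiagonal_eq_sum_range_succ (fun a b => i.choose a * j.choose b)]

/-! ### The Hankel determinant of factorials -/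

lemma hankel_det (μ : ℕ) :
    (Matrix.of fun i j : Fin μ => (((i : ℕ) + (j : ℕ)).factorial : ℝ)).det
      = (∏ i : Fin μ, ((i : ℕ).factorial : ℝ)) ^ 2 := by
  set B : Matrix (Fin μ) (Fin μ) ℝ :=
    Matrix.of (fun i k : Fin μ => (((i : ℕ).factorial * (i : ℕ).choose k : ℕ) : ℝ)) with hB
  have hBB : (Matrix.of fun i j : Fin μ => (((i : ℕ) + (j : ℕ)).factorial : ℝ))
      = B * B.transpose := by
    ext i j
    simp only [Matrix.mul_apply, Matrix.transpose_apply, Matrix.of_apply, hB]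
    rw [Fin.sum_univ_eq_sum_range
      (fun k => ((((i:ℕ).factorial * (i:ℕ).choose k : ℕ) : ℝ) *
        (((j:ℕ).factorial * (j:ℕ).choose k : ℕ) : ℝ)))]
    have : ∀ k, ((((i:ℕ).factorial * (i:ℕ).choose k : ℕ) : ℝ) *
        (((j:ℕ).factorial * (j:ℕ).choose k : ℕ) : ℝ))
        = (((i:ℕ).factorial * (j:ℕ).factorial * ((i:ℕ).choose k * (j:ℕ).choose k) : ℕ) : ℝ) := by
      intro k; push_cast; ring
    simp only [this]
    rw [← Nat.cast_sum, ← Finset.mul_sum, choose_sum_eq _ _ _ j.isLt]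
    norm_cast
    rw [mul_comm ((i:ℕ).factorial) ((j:ℕ).factorial), mul_assoc,
      ← Nat.add_choose_mul_factorial_mul_factorial (i:ℕ) (j:ℕ)]
    ring
  have hBtri : B.BlockTriangular OrderDual.toDual := by
    intro i j hij
    have hij' : (i : ℕ) < (j : ℕ) := hij
    simp only [Matrix.of_apply, hB]
    rw [Nat.choose_eq_zero_of_lt hij', mul_zero, Nat.cast_zero]
  have hdetB : B.det = ∏ i : Fin μ, ((i : ℕ).factorial : ℝ) := by
    rw [Matrix.det_of_lowerTriangular B hBtri]
    refine Finset.prod_congr rfl (fun i _ => ?_)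
    simp [hB]
  rw [hBB, Matrix.det_mul, Matrix.det_transpose, hdetB, sq]

/-! ### Main theorem -/

theorem vandermonde_squared_exp_integral (μ : ℕ) (hμ : 1 ≤ μ) :
    ∫ q in {q : Fin μ → ℝ | ∀ i, 0 < q i},
        (∏ i, ∏ j ∈ Finset.Ioi i, (q i - q j) ^ 2) * Real.exp (-∑ k, q k)
      = (μ.factorial : ℝ) * ∏ k ∈ Finset.range μ, ((k.factorial : ℝ)) ^ 2 := by
  classical
  set g : ℕ → ℝ → ℝ := fun n => Set.indicator (Set.Ioi 0) (fun x => x ^ n * Real.exp (-x))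
    with hgdef
  have hg_int : ∀ n, Integrable (g n) := fun n =>
    (integrable_indicator_iff measurableSet_Ioi).2 (gIntegrableOn n)
  have hg_val : ∀ n, ∫ x, g n x = (n.factorial : ℝ) := fun n => by
    rw [hgdef]
    simp only
    rw [MeasureTheory.integral_indicator measurableSet_Ioi]
    exact gIntegral n
  set S : Set (Fin μ → ℝ) := {q : Fin μ → ℝ | ∀ i, 0 < q i} with hS
  have hSm : MeasurableSet S := by
    have : S = ⋂ i, {q : Fin μ → ℝ | 0 < q i} := by
      ext q; simp [hS, Set.mem_iInter]
    rw [this]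
    exact MeasurableSet.iInter fun i =>
      measurableSet_lt measurable_const (measurable_pi_apply i)
  rw [← MeasureTheory.integral_indicator hSm]
  have key : ∀ q : Fin μ → ℝ,
      S.indicator
        (fun q => (∏ i, ∏ j ∈ Finset.Ioi i, (q i - q j) ^ 2) * Real.exp (-∑ k, q k)) q
      = ∑ σ : Equiv.Perm (Fin μ), ∑ τ : Equiv.Perm (Fin μ),
          (((Equiv.Perm.sign σ : ℤ) : ℝ) * ((Equiv.Perm.sign τ : ℤ) : ℝ)) *
            ∏ i, g ((σ i : ℕ) + (τ i : ℕ)) (q i) := by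
    intro q
    by_cases hq : q ∈ S
    · rw [Set.indicator_of_mem hq]
      have hgq : ∀ n i, g n (q i) = (q i) ^ n * Real.exp (-(q i)) := fun n i =>
        Set.indicator_of_mem (hq i) _
      simp only [hgq]
      have hvd : (∏ i, ∏ j ∈ Finset.Ioi i, (q i - q j) ^ 2)
          = (Matrix.vandermonde q).det ^ 2 := by
        rw [Matrix.det_vandermonde]
        rw [← Finset.prod_pow]
        refine Finset.prod_congr rfl (fun i _ => ?_)
        rw [← Finset.prod_pow]
        refine Finset.prod_congr rfl (fun j _ => ?_)
        rw [← neg_sub (q j) (q i), neg_sq]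
      have hdet : (Matrix.vandermonde q).det
          = ∑ σ : Equiv.Perm (Fin μ),
              ((Equiv.Perm.sign σ : ℤ) : ℝ) * ∏ i, q i ^ ((σ i : ℕ)) := by
        rw [← Matrix.det_transpose, Matrix.det_apply']
        refine Finset.sum_congr rfl (fun σ _ => ?_)
        congr 1
      have hexp : Real.exp (-∑ k, q k) = ∏ i, Real.exp (-(q i)) := by
        rw [← Real.exp_sum]
        congr 1
        rw [Finset.sum_neg_distrib]
      rw [hvd, hdet, hexp, sq, Finset.sum_mul_sum, Finset.sum_mul]
      refine Finset.sum_congr rfl (fun σ _ => ?_)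
      rw [Finset.sum_mul]
      refine Finset.sum_congr rfl (fun τ _ => ?_)
      simp only [pow_add, Finset.prod_mul_distrib]
      ring
    · rw [Set.indicator_of_notMem hq]
      symm
      obtain ⟨i0, hi0⟩ := not_forall.mp hq
      refine Finset.sum_eq_zero (fun σ _ => ?_)
      refine Finset.sum_eq_zero (fun τ _ => ?_)
      rw [Finset.prod_eq_zero (Finset.mem_univ i0), mul_zero]
      exact Set.indicator_of_notMem (by simpa using hi0) _
  rw [MeasureTheory.integral_congr_ae (Filter.Eventually.of_forall key)]
  have hterm_int : ∀ (σ τ : Equiv.Perm (Fin μ)),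
      Integrable (fun q : Fin μ → ℝ =>
        (((Equiv.Perm.sign σ : ℤ) : ℝ) * ((Equiv.Perm.sign τ : ℤ) : ℝ)) *
          ∏ i, g ((σ i : ℕ) + (τ i : ℕ)) (q i)) := fun σ τ =>
    (Integrable.fintype_prod (f := fun i => g ((σ i : ℕ) + (τ i : ℕ)))
      (fun i => hg_int _)).const_mul _
  rw [MeasureTheory.integral_finset_sum _
    (fun σ _ => integrable_finset_sum _ (fun τ _ => hterm_int σ τ))]
  have hint : ∀ σ : Equiv.Perm (Fin μ),
      (∫ q : Fin μ → ℝ, ∑ τ : Equiv.Perm (Fin μ),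
        (((Equiv.Perm.sign σ : ℤ) : ℝ) * ((Equiv.Perm.sign τ : ℤ) : ℝ)) *
          ∏ i, g ((σ i : ℕ) + (τ i : ℕ)) (q i))
      = ∑ τ : Equiv.Perm (Fin μ),
          (((Equiv.Perm.sign σ : ℤ) : ℝ) * ((Equiv.Perm.sign τ : ℤ) : ℝ)) *
            ∏ i, (((σ i : ℕ) + (τ i : ℕ)).factorial : ℝ) := by
    intro σ
    rw [MeasureTheory.integral_finset_sum _ (fun τ _ => hterm_int σ τ)]
    refine Finset.sum_congr rfl (fun τ _ => ?_)
    rw [MeasureTheory.integral_const_mul,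
      MeasureTheory.integral_fintype_prod_volume_eq_prod (ι := Fin μ)
        (f := fun i x => g ((σ i : ℕ) + (τ i : ℕ)) x)]
    simp_rw [hg_val]
  simp only [hint]
  -- the permutation algebra
  have hinner : ∀ σ : Equiv.Perm (Fin μ),
      (∑ τ : Equiv.Perm (Fin μ),
        (((Equiv.Perm.sign σ : ℤ) : ℝ) * ((Equiv.Perm.sign τ : ℤ) : ℝ)) *
          ∏ i, (((σ i : ℕ) + (τ i : ℕ)).factorial : ℝ))
      = (Matrix.of fun i j : Fin μ => (((i : ℕ) + (j : ℕ)).factorial : ℝ)).det := by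
    intro σ
    have hre : ∀ π : Equiv.Perm (Fin μ),
        (((Equiv.Perm.sign σ : ℤ) : ℝ) * ((Equiv.Perm.sign (π * σ) : ℤ) : ℝ)) *
          ∏ i, (((σ i : ℕ) + ((π * σ) i : ℕ)).factorial : ℝ)
        = ((Equiv.Perm.sign π : ℤ) : ℝ) *
            ∏ i : Fin μ, (((i : ℕ) + (π i : ℕ)).factorial : ℝ) := by
      intro π
      have h1 : (∏ i, ((((σ i : ℕ)) + (((π * σ) i : ℕ))).factorial : ℝ))
          = ∏ i : Fin μ, (((i : ℕ) + (π i : ℕ)).factorial : ℝ) := by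
        simp only [Equiv.Perm.mul_apply]
        exact Equiv.prod_comp σ (fun j => (((j : ℕ) + (π j : ℕ)).factorial : ℝ))
      rw [h1]
      congr 1
      rw [map_mul]
      push_cast
      have : ((Equiv.Perm.sign σ : ℤ) : ℝ) * ((Equiv.Perm.sign σ : ℤ) : ℝ) = 1 := by
        rcases Int.units_eq_one_or (Equiv.Perm.sign σ) with h | h <;> rw [h] <;> norm_num
      calc ((Equiv.Perm.sign σ : ℤ) : ℝ) *
            (((Equiv.Perm.sign π : ℤ) : ℝ) * ((Equiv.Perm.sign σ : ℤ) : ℝ))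
          = (((Equiv.Perm.sign σ : ℤ) : ℝ) * ((Equiv.Perm.sign σ : ℤ) : ℝ)) *
            ((Equiv.Perm.sign π : ℤ) : ℝ) := by ring
        _ = ((Equiv.Perm.sign π : ℤ) : ℝ) := by rw [this, one_mul]
    calc (∑ τ : Equiv.Perm (Fin μ),
          (((Equiv.Perm.sign σ : ℤ) : ℝ) * ((Equiv.Perm.sign τ : ℤ) : ℝ)) *
            ∏ i, (((σ i : ℕ) + (τ i : ℕ)).factorial : ℝ))
        = ∑ π : Equiv.Perm (Fin μ),
            (((Equiv.Perm.sign σ : ℤ) : ℝ) * ((Equiv.Perm.sign (π * σ) : ℤ) : ℝ)) *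
              ∏ i, (((σ i : ℕ) + ((π * σ) i : ℕ)).factorial : ℝ) :=
          (Fintype.sum_equiv (Equiv.mulRight σ)
            (fun π => (((Equiv.Perm.sign σ : ℤ) : ℝ) *
                ((Equiv.Perm.sign (π * σ) : ℤ) : ℝ)) *
              ∏ i, (((σ i : ℕ) + ((π * σ) i : ℕ)).factorial : ℝ))
            (fun τ => (((Equiv.Perm.sign σ : ℤ) : ℝ) * ((Equiv.Perm.sign τ : ℤ) : ℝ)) *
              ∏ i, (((σ i : ℕ) + (τ i : ℕ)).factorial : ℝ))
            (fun π => rfl)).symm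
      _ = ∑ π : Equiv.Perm (Fin μ),
            ((Equiv.Perm.sign π : ℤ) : ℝ) * ∏ i : Fin μ, (((i : ℕ) + (π i : ℕ)).factorial : ℝ) :=
          Finset.sum_congr rfl (fun π _ => hre π)
      _ = (Matrix.of fun i j : Fin μ => (((i : ℕ) + (j : ℕ)).factorial : ℝ)).det := by
          rw [Matrix.det_apply']
          refine Finset.sum_congr rfl (fun π _ => ?_)
          congr 1
          refine Finset.prod_congr rfl (fun i _ => ?_)
          rw [Matrix.of_apply, Nat.add_comm]
  simp only [hinner]
  rw [Finset.sum_const, Finset.card_univ, Fintype.card_perm, Fintype.card_fin,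
    hankel_det, nsmul_eq_mul]
  congr 1
  rw [← Finset.prod_pow]
  rw [Fin.prod_univ_eq_prod_range (fun k => ((k.factorial : ℝ)) ^ 2)]
end

section
/- For all k, l ∈ ℕ, ∫_0^∞ e^{−q} · L_k(q) · L_l(q) dq = 1 if k = l and 0 otherwise. -/
open scoped BigOperators
open MeasureTheory Polynomial

private lemma core' (n : ℕ) :
    (∑ j ∈ Finset.range (n+1), (-1:ℤ[X])^j * (n.choose j : ℤ[X]) * (X+1)^j) = (-X)^n := by
  have h := add_pow (-(X+1) : ℤ[X]) 1 n
  have h2 : (-X : ℤ[X])^n = ∑ j ∈ Finset.range (n+1),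
      (-(X+1):ℤ[X])^j * 1^(n-j) * (n.choose j : ℤ[X]) := by
    rw [← h]; ring_nf
  rw [h2]
  refine Finset.sum_congr rfl fun j hj => ?_
  rw [one_pow, show (-(X+1):ℤ[X]) = (-1) * (X+1) by ring, mul_pow]
  ring

private lemma lemA' (i l : ℕ) :
    ∑ j ∈ Finset.range (l+1), (-1:ℤ)^j * (l.choose j) * ((i+j).choose i)
      = (-1)^l * (i.choose l) := by
  have h : (∑ j ∈ Finset.range (l+1), Polynomial.C ((-1:ℤ)^j * l.choose j) * (X+1)^(i+j))
      = (X+1)^i * (-X)^l := by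
    rw [← core', Finset.mul_sum]
    refine Finset.sum_congr rfl fun j hj => ?_
    rw [pow_add]
    simp only [map_mul, map_pow, map_neg, map_one, Polynomial.C_eq_natCast]
    ring
  have h2 := congrArg (fun p => Polynomial.coeff p i) h
  simp only [finset_sum_coeff, coeff_C_mul, coeff_X_add_one_pow] at h2
  rw [show ((X+1)^i * (-X)^l : ℤ[X]) = Polynomial.C ((-1:ℤ)^l) * ((X+1)^i * X^l) by
        simp only [map_pow, map_neg, map_one]; rw [neg_pow]; ring,
      coeff_C_mul, coeff_mul_X_pow', coeff_X_add_one_pow] at h2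
  rw [h2]
  by_cases hl : l ≤ i
  · rw [if_pos hl, Nat.choose_symm hl]
  · rw [if_neg hl, Nat.choose_eq_zero_of_lt (by omega)]
    simp

private lemma lemB' (k l : ℕ) :
    ∑ i ∈ Finset.range (k+1), (-1:ℤ)^i * (k.choose i) * (i.choose l)
      = if k = l then (-1:ℤ)^k else 0 := by
  have h : (∑ i ∈ Finset.range (k+1), Polynomial.C ((-1:ℤ)^i * k.choose i) * (X+1)^i)
      = (-X)^k := by
    rw [← core']
    refine Finset.sum_congr rfl fun i hi => ?_
    simp only [map_mul, map_pow, map_neg, map_one, Polynomial.C_eq_natCast]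
  have h2 := congrArg (fun p => Polynomial.coeff p l) h
  rw [show ((-X)^k : ℤ[X]) = Polynomial.C ((-1:ℤ)^k) * X^k by
        simp only [map_pow, map_neg, map_one]; rw [neg_pow]] at h2
  simp only [finset_sum_coeff, coeff_C_mul, coeff_X_add_one_pow, coeff_X_pow] at h2
  rw [h2]
  by_cases hkl : k = l
  · subst hkl; simp
  · simp [hkl, Ne.symm hkl]

private lemma keyZ' (k l : ℕ) :
    ∑ i ∈ Finset.range (k+1), ∑ j ∈ Finset.range (l+1),
      (-1:ℤ)^(i+j) * (k.choose i) * (l.choose j) * ((i+j).choose i)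
      = if k = l then 1 else 0 := by
  have h1 : ∀ i, ∑ j ∈ Finset.range (l+1),
      (-1:ℤ)^(i+j) * (k.choose i) * (l.choose j) * ((i+j).choose i)
      = (-1)^l * ((-1:ℤ)^i * (k.choose i) * (i.choose l)) := by
    intro i
    have hA := lemA' i l
    calc ∑ j ∈ Finset.range (l+1), (-1:ℤ)^(i+j) * (k.choose i) * (l.choose j) * ((i+j).choose i)
        = (-1:ℤ)^i * (k.choose i) * ∑ j ∈ Finset.range (l+1),
            (-1:ℤ)^j * (l.choose j) * ((i+j).choose i) := by
          rw [Finset.mul_sum]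
          refine Finset.sum_congr rfl fun j hj => ?_
          rw [pow_add]; ring
      _ = (-1)^l * ((-1:ℤ)^i * (k.choose i) * (i.choose l)) := by rw [hA]; ring
  simp only [h1, ← Finset.mul_sum, lemB']
  split_ifs with h
  · subst h; rw [← pow_add, ← two_mul, pow_mul]; norm_num
  · simp

private lemma integrableOn_exp_neg_pow' (n : ℕ) :
    IntegrableOn (fun x : ℝ => Real.exp (-x) * x ^ n) (Set.Ioi 0) := by
  have h := Real.GammaIntegral_convergent (s := n + 1) (by positivity)
  refine h.congr_fun (fun x hx => ?_) measurableSet_Ioi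
  rw [add_sub_cancel_right]; simp only [Real.rpow_natCast]

private lemma integral_exp_neg_pow' (n : ℕ) :
    ∫ x in Set.Ioi (0:ℝ), Real.exp (-x) * x ^ n = n.factorial := by
  have h := Real.Gamma_eq_integral (s := n + 1) (by positivity)
  rw [add_sub_cancel_right, Real.Gamma_nat_eq_factorial] at h
  rw [h]
  refine setIntegral_congr_fun measurableSet_Ioi fun x hx => ?_
  rw [Real.rpow_natCast]

/-- The Laguerre polynomial `L_n`. -/
noncomputable def laguerre (n : ℕ) (x : ℝ) : ℝ :=
  ∑ k ∈ Finset.range (n + 1), (-1) ^ k * (n.choose k : ℝ) * x ^ k / (k.factorial : ℝ)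

theorem laguerre_orthonormal (k l : ℕ) :
    ∫ q in Set.Ioi (0 : ℝ), Real.exp (-q) * laguerre k q * laguerre l q
      = if k = l then 1 else 0 := by
  have hpt : ∀ q : ℝ, Real.exp (-q) * laguerre k q * laguerre l q
      = ∑ i ∈ Finset.range (k+1), ∑ j ∈ Finset.range (l+1),
          ((-1:ℝ)^i * (k.choose i) / (i.factorial) * ((-1:ℝ)^j * (l.choose j) / (j.factorial)))
            * (Real.exp (-q) * q ^ (i+j)) := by
    intro q
    rw [mul_assoc, laguerre, laguerre, Finset.sum_mul_sum, Finset.mul_sum]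
    refine Finset.sum_congr rfl fun i _ => ?_
    rw [Finset.mul_sum]
    refine Finset.sum_congr rfl fun j _ => ?_
    rw [pow_add]; ring
  rw [setIntegral_congr_fun measurableSet_Ioi (fun q _ => hpt q)]
  rw [integral_finset_sum _ (fun i _ => integrable_finset_sum _ (fun j _ =>
    ((integrableOn_exp_neg_pow' (i+j)).const_mul _)))]
  have : ∀ i ∈ Finset.range (k+1),
      (∫ q in Set.Ioi (0:ℝ), ∑ j ∈ Finset.range (l+1),
        ((-1:ℝ)^i * (k.choose i) / (i.factorial) * ((-1:ℝ)^j * (l.choose j) / (j.factorial)))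
          * (Real.exp (-q) * q ^ (i+j)))
      = ∑ j ∈ Finset.range (l+1),
          ((-1:ℝ)^i * (k.choose i) / (i.factorial) * ((-1:ℝ)^j * (l.choose j) / (j.factorial)))
            * ((i+j).factorial : ℝ) := by
    intro i _
    rw [integral_finset_sum _ (fun j _ => ((integrableOn_exp_neg_pow' (i+j)).const_mul _))]
    refine Finset.sum_congr rfl fun j _ => ?_
    rw [MeasureTheory.integral_const_mul, integral_exp_neg_pow']
  rw [Finset.sum_congr rfl this]
  have key := keyZ' k l
  have keyR : ∑ i ∈ Finset.range (k+1), ∑ j ∈ Finset.range (l+1),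
      (-1:ℝ)^(i+j) * (k.choose i) * (l.choose j) * ((i+j).choose i)
      = if k = l then (1:ℝ) else 0 := by
    have := congrArg (fun z : ℤ => (z : ℝ)) key
    push_cast at this
    convert this using 2
  rw [← keyR]
  refine Finset.sum_congr rfl fun i _ => Finset.sum_congr rfl fun j _ => ?_
  have hfacN := Nat.choose_mul_factorial_mul_factorial (Nat.le_add_right i j)
  rw [Nat.add_sub_cancel_left] at hfacN
  have hfac : ((i+j).choose i : ℝ) * (i.factorial) * (j.factorial) = ((i+j).factorial) := by
    exact_mod_cast congrArg (fun n : ℕ => (n : ℝ)) hfacN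
  have hi : (i.factorial : ℝ) ≠ 0 := Nat.cast_ne_zero.mpr i.factorial_ne_zero
  have hj : (j.factorial : ℝ) ≠ 0 := Nat.cast_ne_zero.mpr j.factorial_ne_zero
  rw [pow_add, ← hfac]
  field_simp
end

section
/- For every real x and every real z with |z| < 1, the series ∑_{l=0}^∞ L_l(x) · z^l converges (HasSum) to (1 − z)⁻¹ · Real.exp (x·z / (z − 1)). -/
open scoped BigOperators

theorem laguerre_generating_function (x z : ℝ) (hz : |z| < 1) :
    HasSum (fun l : ℕ => laguerre l x * z ^ l)
      ((1 - z)⁻¹ * Real.exp (x * z / (z - 1))) := by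
  have hz' : ‖z‖ < 1 := by simpa [Real.norm_eq_abs] using hz
  have hz1 : z ≠ 1 := by intro h; rw [h] at hz; norm_num at hz
  have h1z : (1 : ℝ) - z ≠ 0 := sub_ne_zero.mpr (Ne.symm hz1)
  set f : ℕ × ℕ → ℝ := fun p =>
    ((-1) ^ p.1 * x ^ p.1 / (p.1.factorial : ℝ)) * (((p.2 + p.1).choose p.1 : ℝ) * z ^ (p.2 + p.1))
  set c : ℕ → ℝ := fun k => (1 - z)⁻¹ * ((x * z / (z - 1)) ^ k / (k.factorial : ℝ))
  -- fiberwise sums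
  have hfiber : ∀ k : ℕ, HasSum (fun m => f (k, m)) (c k) := by
    intro k
    have h := ((hasSum_choose_mul_geometric_of_norm_lt_one k hz').mul_right (z ^ k)).mul_left
      ((-1) ^ k * x ^ k / (k.factorial : ℝ))
    have hfun : (fun m => f (k, m)) = fun m =>
        (-1) ^ k * x ^ k / (k.factorial : ℝ) * (((m + k).choose k : ℝ) * z ^ m * z ^ k) := by
      funext m
      simp only [f]
      rw [pow_add]
      ring
    have hval : c k = (-1) ^ k * x ^ k / (k.factorial : ℝ) * (1 / (1 - z) ^ (k + 1) * z ^ k) := by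
      have e1 : x * z / (z - 1) = -1 * (x * z * (1 - z)⁻¹) := by
        rw [show z - 1 = -(1 - z) by ring, div_eq_mul_inv, inv_neg]; ring
      simp only [c, e1, mul_pow, one_div, pow_succ, mul_inv, inv_pow, div_eq_mul_inv]
      ring
    rw [hfun, hval]
    exact h
  -- sum of the fiber sums
  have hc : HasSum c ((1 - z)⁻¹ * Real.exp (x * z / (z - 1))) := by
    have := (NormedSpace.expSeries_div_hasSum_exp (x * z / (z - 1))).mul_left (1 - z)⁻¹
    rw [← Real.exp_eq_exp_ℝ] at this
    exact this
  -- summability of f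
  have habs : Summable fun p : ℕ × ℕ => |f p| := by
    rw [summable_prod_of_nonneg (fun p => abs_nonneg _)]
    have key : ∀ k : ℕ, HasSum (fun m => |f (k, m)|)
        ((|x| ^ k / (k.factorial : ℝ)) * (1 / (1 - |z|) ^ (k + 1) * |z| ^ k)) := by
      intro k
      have h := ((hasSum_choose_mul_geometric_of_norm_lt_one k
        (by simpa [Real.norm_eq_abs, abs_abs] using hz : ‖|z|‖ < 1)).mul_right (|z| ^ k)).mul_left
        (|x| ^ k / (k.factorial : ℝ))
      have hfun : (fun m => |f (k, m)|) = fun m =>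
          |x| ^ k / (k.factorial : ℝ) * (((m + k).choose k : ℝ) * |z| ^ m * |z| ^ k) := by
        funext m
        simp only [f, abs_mul, abs_div, abs_pow, abs_neg, abs_one, one_pow, one_mul,
          Nat.abs_cast, pow_add]
        ring
      rw [hfun]
      exact h
    refine ⟨fun k => (key k).summable, ?_⟩
    have heq : ∀ k : ℕ, (∑' m, |f (k, m)|)
        = (1 - |z|)⁻¹ * ((|x| * |z| / (1 - |z|)) ^ k / (k.factorial : ℝ)) := by
      intro k
      rw [(key k).tsum_eq]
      simp only [mul_pow, one_div, pow_succ, mul_inv, inv_pow, div_eq_mul_inv]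
      ring
    rw [funext heq]
    exact ((NormedSpace.expSeries_div_hasSum_exp (|x| * |z| / (1 - |z|))).summable).mul_left _
  have hf : Summable f := habs.of_abs
  have hT : HasSum f ((1 - z)⁻¹ * Real.exp (x * z / (z - 1))) := by
    have h := hf.hasSum
    have h2 := h.prod_fiberwise (fun k => hfiber k)
    rwa [h2.unique hc] at h
  -- transfer to the sigma type over antidiagonals
  have hsig : HasSum (f ∘ Finset.HasAntidiagonal.sigmaAntidiagonalEquivProd)
      ((1 - z)⁻¹ * Real.exp (x * z / (z - 1))) :=
    (Equiv.hasSum_iff _).mpr hT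
  refine HasSum.sigma hsig (fun l => ?_)
  have hfin : HasSum (fun p : (Finset.HasAntidiagonal.antidiagonal l : Finset (ℕ × ℕ)) => f (p : ℕ × ℕ))
      (∑ p ∈ Finset.HasAntidiagonal.antidiagonal l, f p) := by
    have h0 := hasSum_fintype (fun p : (Finset.HasAntidiagonal.antidiagonal l : Finset (ℕ × ℕ)) => f (p : ℕ × ℕ))
    rwa [Finset.sum_coe_sort] at h0
  have hval : ∑ p ∈ Finset.HasAntidiagonal.antidiagonal l, f p = laguerre l x * z ^ l := by
    rw [Finset.Nat.sum_antidiagonal_eq_sum_range_succ_mk f l]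
    simp only [laguerre, Finset.sum_mul]
    refine Finset.sum_congr rfl fun k hk => ?_
    simp only [Finset.mem_range] at hk
    have hkl : l - k + k = l := Nat.sub_add_cancel (Nat.lt_succ_iff.mp hk)
    simp only [f, hkl]
    ring
  rw [hval] at hfin
  exact hfin
end

section
/- For all k, l ∈ ℕ and every real β > −1, I_{k l}^{(β)} = ((−1)^l / l!) · ∑_{t=0}^{k} (−1)^t · (k choose t) · (Real.Gamma (t + β + 1))² / (t! · Real.Gamma (t + β + 1 − l)). (When t + β + 1 − l is a nonpositive integer, Real.Gamma vanishes there, and the corresponding term of the sum—interpreted via Lean's division-by-zero convention—is 0, matching the vanishing falling factorial (t+β)(t+β−1)⋯(t+β−l+1).) -/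
open scoped BigOperators

open Finset MeasureTheory

/-- Rising product `b (b+1) ⋯ (b+r-1)`. -/
noncomputable def PP (b : ℝ) (r : ℕ) : ℝ := ∏ i ∈ Finset.range r, (b + i)

lemma PP_zero (b : ℝ) : PP b 0 = 1 := by simp [PP]

lemma PP_succ (b : ℝ) (r : ℕ) : PP b (r + 1) = PP b r * (b + r) := by
  simp [PP, Finset.prod_range_succ]

lemma PP_succ' (b : ℝ) (r : ℕ) : PP b (r + 1) = b * PP (b + 1) r := by
  simp only [PP, Finset.prod_range_succ', Nat.cast_zero, add_zero]
  rw [mul_comm]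
  congr 1
  apply Finset.prod_congr rfl
  intro i _
  push_cast
  ring

/-- Division-free Chu–Vandermonde identity. -/
lemma chu (l : ℕ) : ∀ (m : ℕ) (b : ℝ),
    ∑ r ∈ Finset.range (l + 1), (-1) ^ r * (l.choose r : ℝ) * PP b r * PP ((m : ℝ) + 1 + r) (l - r)
      = PP ((m : ℝ) + 1 - b) l := by
  induction l with
  | zero => intro m b; simp [PP]
  | succ l ih =>
    intro m b
    have h2 : ∑ r ∈ Finset.range (l + 2),
        (-1) ^ r * (l.choose r : ℝ) * PP b r * PP ((m : ℝ) + 1 + r) (l + 1 - r)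
        = ((m : ℝ) + l + 1) * PP ((m : ℝ) + 1 - b) l := by
      rw [Finset.sum_range_succ]
      have hz : (l.choose (l+1) : ℝ) = 0 := by
        simp [Nat.choose_eq_zero_of_lt]
      rw [hz, ← ih m b, Finset.mul_sum]
      have : ∀ r ∈ Finset.range (l+1),
          (-1) ^ r * (l.choose r : ℝ) * PP b r * PP ((m : ℝ) + 1 + r) (l + 1 - r)
          = ((m : ℝ) + l + 1) * ((-1) ^ r * (l.choose r : ℝ) * PP b r * PP ((m : ℝ) + 1 + r) (l - r)) := by
        intro r hr
        have hr' : r ≤ l := Nat.lt_succ_iff.mp (Finset.mem_range.mp hr)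
        have h3 : l + 1 - r = (l - r) + 1 := by omega
        rw [h3, PP_succ]
        have h4 : ((l - r : ℕ) : ℝ) = (l : ℝ) - r := by
          rw [Nat.cast_sub hr']
        rw [h4]
        ring
      rw [Finset.sum_congr rfl this]
      ring_nf
    have expand : ∀ i ∈ Finset.range (l + 1),
        (-1) ^ (i+1) * ((l+1).choose (i+1) : ℝ) * PP b (i+1) * PP ((m : ℝ) + 1 + ((i+1 : ℕ) : ℝ)) (l + 1 - (i+1))
        = (-1) ^ (i+1) * (l.choose (i+1) : ℝ) * PP b (i+1) * PP ((m : ℝ) + 1 + ((i+1 : ℕ) : ℝ)) (l + 1 - (i+1))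
          + (-b) * ((-1) ^ i * (l.choose i : ℝ) * PP (b+1) i * PP (((m+1 : ℕ) : ℝ) + 1 + (i : ℝ)) (l - i)) := by
      intro i hi
      have harg : ((m+1 : ℕ) : ℝ) + 1 + (i : ℝ) = (m : ℝ) + 1 + ((i+1 : ℕ) : ℝ) := by
        push_cast; ring
      rw [harg, Nat.choose_succ_succ, Nat.succ_sub_succ, PP_succ' b i]
      push_cast
      ring
    calc ∑ r ∈ Finset.range (l + 1 + 1),
          (-1) ^ r * ((l+1).choose r : ℝ) * PP b r * PP ((m : ℝ) + 1 + r) (l + 1 - r)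
        = (∑ i ∈ Finset.range (l + 1),
            (-1) ^ (i+1) * ((l+1).choose (i+1) : ℝ) * PP b (i+1) * PP ((m : ℝ) + 1 + ((i+1 : ℕ) : ℝ)) (l + 1 - (i+1)))
          + (-1) ^ 0 * ((l+1).choose 0 : ℝ) * PP b 0 * PP ((m : ℝ) + 1 + ((0 : ℕ) : ℝ)) (l + 1 - 0) := by
          exact Finset.sum_range_succ' _ (l+1)
      _ = (∑ i ∈ Finset.range (l + 1),
            ((-1) ^ (i+1) * (l.choose (i+1) : ℝ) * PP b (i+1) * PP ((m : ℝ) + 1 + ((i+1 : ℕ) : ℝ)) (l + 1 - (i+1))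
             + (-b) * ((-1) ^ i * (l.choose i : ℝ) * PP (b+1) i * PP (((m+1 : ℕ) : ℝ) + 1 + (i : ℝ)) (l - i))))
          + (-1) ^ 0 * ((l+1).choose 0 : ℝ) * PP b 0 * PP ((m : ℝ) + 1 + ((0 : ℕ) : ℝ)) (l + 1 - 0) := by
          rw [Finset.sum_congr rfl expand]
      _ = ((∑ i ∈ Finset.range (l + 1),
            (-1) ^ (i+1) * (l.choose (i+1) : ℝ) * PP b (i+1) * PP ((m : ℝ) + 1 + ((i+1 : ℕ) : ℝ)) (l + 1 - (i+1)))
          + (-1) ^ 0 * (l.choose 0 : ℝ) * PP b 0 * PP ((m : ℝ) + 1 + ((0 : ℕ) : ℝ)) (l + 1 - 0))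
          + (-b) * (∑ i ∈ Finset.range (l + 1),
            (-1) ^ i * (l.choose i : ℝ) * PP (b+1) i * PP (((m+1 : ℕ) : ℝ) + 1 + (i : ℝ)) (l - i)) := by
          rw [Finset.sum_add_distrib, ← Finset.mul_sum]
          simp
          ring
      _ = (∑ r ∈ Finset.range (l + 2),
            (-1) ^ r * (l.choose r : ℝ) * PP b r * PP ((m : ℝ) + 1 + r) (l + 1 - r))
          + (-b) * PP (((m+1 : ℕ) : ℝ) + 1 - (b+1)) l := by
          rw [← Finset.sum_range_succ' (fun r => (-1) ^ r * (l.choose r : ℝ) * PP b r * PP ((m : ℝ) + 1 + r) (l + 1 - r)) (l+1),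
            ih (m+1) (b+1)]
      _ = PP ((m : ℝ) + 1 - b) (l + 1) := by
          rw [h2]
          have harg : ((m+1 : ℕ) : ℝ) + 1 - (b+1) = (m : ℝ) + 1 - b := by push_cast; ring
          rw [harg, PP_succ]
          ring

lemma factP (d : ℕ) : ∀ r : ℕ, (r.factorial : ℝ) * PP ((r : ℝ) + 1) d = ((r + d).factorial : ℝ) := by
  induction d with
  | zero => intro r; simp [PP_zero]
  | succ n ihn =>
    intro r
    rw [PP_succ, ← mul_assoc, ihn r]
    have h : r + (n + 1) = (r + n) + 1 := by omega
    rw [h, Nat.factorial_succ]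
    push_cast
    ring

lemma Gamma_add_nat (s : ℕ) (a : ℝ) (ha : 0 < a) :
    Real.Gamma (a + s) = Real.Gamma a * PP a s := by
  induction s with
  | zero => simp [PP_zero]
  | succ n ihn =>
    have h1 : a + ((n + 1 : ℕ) : ℝ) = (a + n) + 1 := by push_cast; ring
    have h2 : a + ((n : ℕ) : ℝ) ≠ 0 := by positivity
    rw [h1, Real.Gamma_add_one h2, ihn, PP_succ]
    ring

lemma Gamma_desc (l : ℕ) : ∀ a : ℝ, 0 < a → Real.Gamma (a - l) ≠ 0 →
    Real.Gamma a = (∏ j ∈ Finset.range l, (a - 1 - j)) * Real.Gamma (a - l) := by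
  induction l with
  | zero => intro a _ _; simp
  | succ n ihn =>
    intro a ha hne
    have hG : Real.Gamma (a - n) ≠ 0 := by
      intro h0
      rw [Real.Gamma_eq_zero_iff] at h0
      obtain ⟨m, hm⟩ := h0
      apply hne
      rw [Real.Gamma_eq_zero_iff]
      exact ⟨m + 1, by push_cast at hm ⊢; linarith⟩
    have step : Real.Gamma (a - n) = (a - 1 - n) * Real.Gamma (a - (n + 1 : ℕ)) := by
      have h3 : a - (n : ℝ) = (a - ((n + 1 : ℕ) : ℝ)) + 1 := by push_cast; ring
      have h4 : a - ((n + 1 : ℕ) : ℝ) ≠ 0 := by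
        intro h0; apply hne; rw [h0, Real.Gamma_zero]
      rw [h3, Real.Gamma_add_one h4]
      push_cast
      ring_nf
    rw [ihn a ha hG, step, Finset.prod_range_succ]
    ring

lemma Gamma_sq_div (l : ℕ) (a : ℝ) (ha : 0 < a) :
    Real.Gamma a ^ 2 / Real.Gamma (a - l)
      = Real.Gamma a * ∏ j ∈ Finset.range l, (a - 1 - j) := by
  by_cases h : Real.Gamma (a - l) = 0
  · rw [h, div_zero]
    rw [Real.Gamma_eq_zero_iff] at h
    obtain ⟨m, hm⟩ := h
    have hml : m < l := by
      by_contra hc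
      push_neg at hc
      have h1 : (l : ℝ) ≤ (m : ℝ) := by exact_mod_cast hc
      linarith
    have hcast : ((l - m - 1 : ℕ) : ℝ) = (l : ℝ) - m - 1 := by
      rw [Nat.cast_sub (by omega : 1 ≤ l - m), Nat.cast_sub (by omega : m ≤ l)]
      norm_num
    have hz : a - 1 - ((l - m - 1 : ℕ) : ℝ) = 0 := by
      rw [hcast]; linarith
    rw [Finset.prod_eq_zero (Finset.mem_range.mpr (by omega : l - m - 1 < l)) hz, mul_zero]
  · rw [Gamma_desc l a ha h]
    field_simp

lemma sumGamma (l : ℕ) (a : ℝ) (ha : 0 < a) :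
    ∑ s ∈ Finset.range (l + 1), (-1) ^ s * (l.choose s : ℝ) * Real.Gamma (a + s) / (s.factorial : ℝ)
      = (-1) ^ l / (l.factorial : ℝ) * (Real.Gamma a ^ 2 / Real.Gamma (a - l)) := by
  have chu0 := chu l 0 a
  simp only [Nat.cast_zero, zero_add] at chu0
  have hprod : PP (1 - a) l = (-1) ^ l * ∏ j ∈ Finset.range l, (a - 1 - j) := by
    simp only [PP]
    calc ∏ i ∈ Finset.range l, (1 - a + i)
        = ∏ i ∈ Finset.range l, (-1) * (a - 1 - i) := Finset.prod_congr rfl (fun i _ => by ring)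
      _ = (-1) ^ l * ∏ j ∈ Finset.range l, (a - 1 - j) := by
          rw [Finset.prod_mul_distrib, Finset.prod_const, Finset.card_range]
  calc ∑ s ∈ Finset.range (l + 1), (-1) ^ s * (l.choose s : ℝ) * Real.Gamma (a + s) / (s.factorial : ℝ)
      = ∑ s ∈ Finset.range (l + 1),
          Real.Gamma a / (l.factorial : ℝ) * ((-1) ^ s * (l.choose s : ℝ) * PP a s * PP (1 + s) (l - s)) := by
        refine Finset.sum_congr rfl fun s hs => ?_
        have hs' : s ≤ l := Nat.lt_succ_iff.mp (Finset.mem_range.mp hs)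
        rw [Gamma_add_nat s a ha]
        have hf : (s.factorial : ℝ) * PP ((s : ℝ) + 1) (l - s) = (l.factorial : ℝ) := by
          rw [factP (l - s) s, Nat.add_sub_cancel' hs']
        have harg : (1 : ℝ) + (s : ℝ) = (s : ℝ) + 1 := by ring
        rw [harg]
        have hs0 : (s.factorial : ℝ) ≠ 0 := Nat.cast_ne_zero.mpr s.factorial_ne_zero
        have hl0 : (l.factorial : ℝ) ≠ 0 := Nat.cast_ne_zero.mpr l.factorial_ne_zero
        field_simp
        linear_combination (-((l.choose s : ℝ) * PP a s)) * hf
    _ = Real.Gamma a / (l.factorial : ℝ) * PP (1 - a) l := by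
        rw [← Finset.mul_sum, chu0]
    _ = (-1) ^ l / (l.factorial : ℝ) * (Real.Gamma a * ∏ j ∈ Finset.range l, (a - 1 - j)) := by
        rw [hprod]; ring
    _ = (-1) ^ l / (l.factorial : ℝ) * (Real.Gamma a ^ 2 / Real.Gamma (a - l)) := by
        rw [Gamma_sq_div l a ha]

/-- `I_{kl}^{(β)} = ∫₀^∞ e^{-q} q^β L_k(q) L_l(q) dq`. -/
noncomputable def Ikl (k l : ℕ) (β : ℝ) : ℝ :=
  ∫ q in Set.Ioi (0 : ℝ), Real.exp (-q) * q ^ β * laguerre k q * laguerre l q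

lemma intOn {β : ℝ} (hβ : -1 < β) (n : ℕ) :
    IntegrableOn (fun q : ℝ => Real.exp (-q) * q ^ β * q ^ n) (Set.Ioi 0) := by
  have hn : (0 : ℝ) ≤ n := Nat.cast_nonneg n
  have h : (0 : ℝ) < β + n + 1 := by linarith
  refine (Real.GammaIntegral_convergent h).congr_fun (fun x hx => ?_) measurableSet_Ioi
  have hx' : (0 : ℝ) < x := hx
  dsimp only
  rw [show β + (n : ℝ) + 1 - 1 = β + n by ring, Real.rpow_add hx', Real.rpow_natCast, mul_assoc]

lemma intVal {β : ℝ} (hβ : -1 < β) (n : ℕ) :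
    ∫ q in Set.Ioi (0 : ℝ), Real.exp (-q) * q ^ β * q ^ n = Real.Gamma (β + n + 1) := by
  have hn : (0 : ℝ) ≤ n := Nat.cast_nonneg n
  have h : (0 : ℝ) < β + n + 1 := by linarith
  rw [Real.Gamma_eq_integral h]
  refine setIntegral_congr_fun measurableSet_Ioi fun x hx => ?_
  have hx' : (0 : ℝ) < x := hx
  rw [show β + (n : ℝ) + 1 - 1 = β + n by ring, Real.rpow_add hx', Real.rpow_natCast, mul_assoc]

theorem Ikl_expand (k l : ℕ) (β : ℝ) (hβ : -1 < β) :
    Ikl k l β = ∑ t ∈ Finset.range (k + 1), ∑ s ∈ Finset.range (l + 1),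
      ((-1) ^ t * (k.choose t : ℝ) / (t.factorial : ℝ)) *
        ((-1) ^ s * (l.choose s : ℝ) / (s.factorial : ℝ)) * Real.Gamma (β + (t + s : ℕ) + 1) := by
  have hexp : (fun q : ℝ => Real.exp (-q) * q ^ β * laguerre k q * laguerre l q)
      = fun q : ℝ => ∑ t ∈ Finset.range (k + 1), ∑ s ∈ Finset.range (l + 1),
          ((-1) ^ t * (k.choose t : ℝ) / (t.factorial : ℝ)) *
            ((-1) ^ s * (l.choose s : ℝ) / (s.factorial : ℝ)) *
            (Real.exp (-q) * q ^ β * q ^ (t + s : ℕ)) := by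
    funext q
    simp only [laguerre, Finset.mul_sum, Finset.sum_mul]
    rw [Finset.sum_comm]
    refine Finset.sum_congr rfl fun t _ => Finset.sum_congr rfl fun s _ => ?_
    rw [pow_add]
    ring
  rw [Ikl, hexp]
  rw [integral_finset_sum _ (fun t _ => ?_)]
  · refine Finset.sum_congr rfl fun t _ => ?_
    rw [integral_finset_sum _ (fun s _ => ((intOn hβ (t + s)).const_mul _))]
    refine Finset.sum_congr rfl fun s _ => ?_
    rw [MeasureTheory.integral_const_mul, intVal hβ (t + s)]
  · exact integrable_finset_sum _ (fun s _ => ((intOn hβ (t + s)).const_mul _))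

theorem Ikl_eq_hypergeometric_sum (k l : ℕ) (β : ℝ) (hβ : -1 < β) :
    Ikl k l β
      = ((-1) ^ l / (l.factorial : ℝ)) *
        ∑ t ∈ Finset.range (k + 1),
          (-1) ^ t * (k.choose t : ℝ) * (Real.Gamma (t + β + 1)) ^ 2 /
            ((t.factorial : ℝ) * Real.Gamma (t + β + 1 - l)) := by
  rw [Ikl_expand k l β hβ, Finset.mul_sum]
  refine Finset.sum_congr rfl fun t _ => ?_
  have ht : (0 : ℝ) ≤ (t : ℝ) := Nat.cast_nonneg t
  have ha : 0 < (t : ℝ) + β + 1 := by linarith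
  calc ∑ s ∈ Finset.range (l + 1),
        ((-1) ^ t * (k.choose t : ℝ) / (t.factorial : ℝ)) *
          ((-1) ^ s * (l.choose s : ℝ) / (s.factorial : ℝ)) * Real.Gamma (β + (t + s : ℕ) + 1)
      = (∑ s ∈ Finset.range (l + 1),
          (-1) ^ s * (l.choose s : ℝ) * Real.Gamma (((t : ℝ) + β + 1) + s) / (s.factorial : ℝ))
          * ((-1) ^ t * (k.choose t : ℝ) / (t.factorial : ℝ)) := by
        rw [Finset.sum_mul]
        refine Finset.sum_congr rfl fun s _ => ?_
        rw [show β + ((t + s : ℕ) : ℝ) + 1 = ((t : ℝ) + β + 1) + s by push_cast; ring]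
        ring
    _ = ((-1) ^ l / (l.factorial : ℝ) *
          (Real.Gamma ((t : ℝ) + β + 1) ^ 2 / Real.Gamma (((t : ℝ) + β + 1) - l)))
          * ((-1) ^ t * (k.choose t : ℝ) / (t.factorial : ℝ)) := by
        rw [sumGamma l ((t : ℝ) + β + 1) ha]
    _ = (-1) ^ l / (l.factorial : ℝ) *
          ((-1) ^ t * (k.choose t : ℝ) * Real.Gamma ((t : ℝ) + β + 1) ^ 2 /
            ((t.factorial : ℝ) * Real.Gamma ((t : ℝ) + β + 1 - l))) := by
        rw [show (t : ℝ) + β + 1 - (l : ℝ) = ((t : ℝ) + β + 1) - l from rfl]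
        ring
end

section
/- For every k ∈ ℕ, every real β > −1 and every real z with |z| < 1, the series ∑_{l=0}^∞ I_{k l}^{(β)} · z^l converges (HasSum) to Real.Gamma (β + 1) · ∑_{t=0}^{k} (−1)^t · (k choose t) · (∏_{j=0}^{t−1} (β + 1 + j)) / t! · (1 − z)^{t + β}. -/
set_option maxHeartbeats 1000000

open scoped BigOperators
open Finset

lemma S_identity : ∀ (l : ℕ) (γ : ℝ) (i : ℕ),
    ∑ m ∈ range (l+1), (-1:ℝ)^m * (l.choose m) * (∏ j ∈ range m, (γ + j)) *
      ((i.factorial : ℝ) / ((m+i).factorial : ℝ))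
    = (∏ j ∈ range l, ((i:ℝ) + 1 - γ + j)) / (∏ j ∈ range l, ((i:ℝ) + 1 + j)) := by
  intro l
  induction l with
  | zero =>
    intro γ i
    simp [div_self (Nat.cast_ne_zero.2 i.factorial_ne_zero : (i.factorial:ℝ) ≠ 0)]
  | succ l ih =>
    intro γ i
    have hfac : ∀ n : ℕ, ((n.factorial : ℝ)) ≠ 0 := fun n => Nat.cast_ne_zero.2 n.factorial_ne_zero
    have hi1 : ((i:ℝ) + 1) ≠ 0 := by positivity
    -- Step 1: recurrence
    have step : ∑ m ∈ range (l+2), (-1:ℝ)^m * ((l+1).choose m) * (∏ j ∈ range m, (γ + j)) *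
        ((i.factorial : ℝ) / ((m+i).factorial : ℝ))
        = (∑ m ∈ range (l+1), (-1:ℝ)^m * (l.choose m) * (∏ j ∈ range m, (γ + j)) *
            ((i.factorial : ℝ) / ((m+i).factorial : ℝ)))
          - γ/((i:ℝ)+1) * ∑ m ∈ range (l+1), (-1:ℝ)^m * (l.choose m) *
              (∏ j ∈ range m, ((γ+1) + j)) * (((i+1).factorial : ℝ) / ((m+(i+1)).factorial : ℝ)) := by
      rw [Finset.sum_range_succ' (fun m => (-1:ℝ)^m * ((l+1).choose m) * (∏ j ∈ range m, (γ + j)) *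
        ((i.factorial : ℝ) / ((m+i).factorial : ℝ))) (l+1)]
      have hsplit : ∀ m ∈ range (l+1), (-1:ℝ)^(m+1) * ((l+1).choose (m+1)) * (∏ j ∈ range (m+1), (γ + j)) *
          ((i.factorial : ℝ) / (((m+1)+i).factorial : ℝ))
          = (-1:ℝ)^(m+1) * ((l).choose (m+1)) * (∏ j ∈ range (m+1), (γ + j)) *
            ((i.factorial : ℝ) / (((m+1)+i).factorial : ℝ))
          + (-(γ/((i:ℝ)+1))) * ((-1:ℝ)^m * (l.choose m) *
              (∏ j ∈ range m, ((γ+1) + j)) * (((i+1).factorial : ℝ) / ((m+(i+1)).factorial : ℝ))) := by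
        intro m _
        rw [Nat.choose_succ_succ l m]
        rw [Finset.prod_range_succ' (fun j => γ + (j:ℝ))]
        have h3 : ∏ j ∈ range m, (γ + ((j+1 : ℕ):ℝ)) = ∏ j ∈ range m, ((γ+1) + (j:ℝ)) := by
          refine Finset.prod_congr rfl fun x _ => ?_
          push_cast; ring
        rw [h3]
        have h1 : (((m+1)+i).factorial : ℝ) = ((m + (i+1)).factorial : ℝ) := by ring_nf
        have h2 : (((i+1)).factorial : ℝ) = ((i:ℝ)+1) * (i.factorial : ℝ) := by
          push_cast [Nat.factorial_succ]; ring
        rw [h1, h2]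
        push_cast
        field_simp
        ring
      rw [Finset.sum_congr rfl hsplit, Finset.sum_add_distrib]
      have hlast : ∑ m ∈ range (l+1), (-1:ℝ)^(m+1) * ((l).choose (m+1)) * (∏ j ∈ range (m+1), (γ + j)) *
          ((i.factorial : ℝ) / (((m+1)+i).factorial : ℝ))
          = (∑ m ∈ range (l+1), (-1:ℝ)^m * (l.choose m) * (∏ j ∈ range m, (γ + j)) *
            ((i.factorial : ℝ) / ((m+i).factorial : ℝ))) - 1 := by
        rw [Finset.sum_range_succ (fun m => (-1:ℝ)^(m+1) * ((l).choose (m+1)) * (∏ j ∈ range (m+1), (γ + j)) *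
          ((i.factorial : ℝ) / (((m+1)+i).factorial : ℝ))) l,
          Finset.sum_range_succ' (fun m => (-1:ℝ)^m * (l.choose m) * (∏ j ∈ range m, (γ + j)) *
          ((i.factorial : ℝ) / ((m+i).factorial : ℝ))) l]
        simp [Nat.choose_succ_self, div_self (hfac i)]
      rw [hlast, ← Finset.mul_sum]
      have h0 : (-1:ℝ)^0 * (((l+1).choose 0 : ℕ):ℝ) * (∏ j ∈ range 0, (γ + j)) *
          ((i.factorial : ℝ) / ((0+i).factorial : ℝ)) = 1 := by
        simp [div_self (hfac i)]
      rw [h0]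
      ring
    rw [step, ih γ i, ih (γ+1) (i+1)]
    push_cast
    -- now pure product algebra
    have hA : ∏ j ∈ range l, ((i:ℝ) + 1 + 1 - (γ+1) + j) = ∏ j ∈ range l, ((i:ℝ) + 1 - γ + j) := by
      refine Finset.prod_congr rfl fun x _ => ?_
      ring
    rw [hA]
    set A := ∏ j ∈ range l, ((i:ℝ) + 1 - γ + j) with hAdef
    have hD : (0:ℝ) < ∏ j ∈ range l, ((i:ℝ) + 1 + j) := by
      apply Finset.prod_pos; intro j _; positivity
    have hD' : (0:ℝ) < ∏ j ∈ range l, ((i:ℝ) + 1 + 1 + j) := by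
      apply Finset.prod_pos; intro j _; positivity
    have hrel : (∏ j ∈ range l, ((i:ℝ) + 1 + j)) * ((i:ℝ)+1+l) =
        ((i:ℝ)+1) * ∏ j ∈ range l, ((i:ℝ) + 1 + 1 + j) := by
      have e1 : ∏ j ∈ range (l+1), ((i:ℝ) + 1 + j) = (∏ j ∈ range l, ((i:ℝ) + 1 + j)) * ((i:ℝ)+1+l) := by
        rw [Finset.prod_range_succ]
      have e2 : ∏ j ∈ range (l+1), ((i:ℝ) + 1 + j) =
          (∏ j ∈ range l, ((i:ℝ) + 1 + 1 + j)) * ((i:ℝ)+1) := by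
        rw [Finset.prod_range_succ' (fun j => (i:ℝ) + 1 + j)]
        have t1 : ∀ x ∈ range l, (i:ℝ) + 1 + ((x+1:ℕ):ℝ) = (i:ℝ) + 1 + 1 + x := by
          intro x _; push_cast; ring
        rw [Finset.prod_congr rfl t1]
        norm_num
      rw [e1] at e2; linarith [e2]
    have hNum : ∏ j ∈ range (l + 1), ((i:ℝ) + 1 - γ + j) = A * ((i:ℝ)+1-γ+l) :=
      Finset.prod_range_succ _ _
    have hDen : ∏ j ∈ range (l + 1), ((i:ℝ) + 1 + j) = (∏ j ∈ range l, ((i:ℝ) + 1 + j)) * ((i:ℝ)+1+l) :=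
      Finset.prod_range_succ _ _
    rw [hNum, hDen]
    have hil : ((i:ℝ)+1+l) ≠ 0 := by positivity
    have hD'eq : ∏ j ∈ range l, ((i:ℝ) + 1 + 1 + j) =
        (∏ j ∈ range l, ((i:ℝ) + 1 + j)) * ((i:ℝ)+1+l) / ((i:ℝ)+1) := by
      field_simp
      linarith [hrel]
    rw [hD'eq]
    field_simp
    ring


lemma coef_bound (a : ℝ) (k : ℕ) (hk : |a| ≤ k) (l : ℕ) :
    |∏ j ∈ range l, (a + j)| / l.factorial ≤ ((l + k).choose k : ℝ) := by
  induction l with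
  | zero => simp
  | succ l ih =>
    have h1 : |∏ j ∈ range (l+1), (a + j)| = |∏ j ∈ range l, (a + j)| * |a + l| := by
      rw [Finset.prod_range_succ, abs_mul]
    have h2 : |a + l| ≤ (k:ℝ) + l + 1 := by
      calc |a + l| ≤ |a| + l := by
            refine (abs_add_le _ _).trans ?_
            simp [abs_of_nonneg (by positivity : (0:ℝ) ≤ (l:ℝ))]
        _ ≤ (k:ℝ) + l + 1 := by linarith
    have hfac : ((l+1).factorial : ℝ) = (l+1) * l.factorial := by
      push_cast [Nat.factorial_succ]; ring
    have hlfac : (0:ℝ) < (l.factorial : ℝ) := by positivity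
    have e1 : (l+k).choose l = (l+k).choose k := by
      rw [← Nat.choose_symm (Nat.le_add_left k l)]
      congr 1; omega
    have e2 : (l+k+1).choose (l+1) = (l+k+1).choose k := by
      rw [← Nat.choose_symm (by omega : k ≤ l+k+1)]
      congr 1; omega
    have nat_id : (l + k + 1) * (l+k).choose k = ((l+1)+k).choose k * (l + 1) := by
      have h := Nat.add_one_mul_choose_eq (l+k) l
      rw [e1, e2] at h
      rw [show (l+1)+k = l+k+1 by omega]
      exact h
    have cast_id : (((l+1)+k).choose k : ℝ) * ((l:ℝ)+1) = ((l+k).choose k : ℝ) * ((l:ℝ)+(k:ℝ)+1) := by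
      have := congrArg (fun n : ℕ => (n : ℝ)) nat_id
      push_cast at this
      linarith
    have ihm : |∏ j ∈ range l, (a + j)| ≤ ((l+k).choose k : ℝ) * l.factorial :=
      (div_le_iff₀ hlfac).1 ih
    rw [h1, hfac, div_le_iff₀ (by positivity)]
    calc |∏ j ∈ range l, (a + j)| * |a + l|
        ≤ (((l+k).choose k : ℝ) * l.factorial) * ((k:ℝ) + l + 1) := by
          apply mul_le_mul ihm h2 (abs_nonneg _) (by positivity)
      _ = ((((l+1)+k).choose k : ℝ) * ((l:ℝ)+1)) * l.factorial := by
          rw [cast_id]; ring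
      _ = (((l+1)+k).choose k : ℝ) * (((l:ℝ) + 1) * l.factorial) := by ring

lemma binomial_hasSum (a : ℝ) {z : ℝ} (hz : |z| < 1) :
    HasSum (fun l : ℕ => (∏ j ∈ range l, (a + j)) / l.factorial * z ^ l)
      ((1 - z) ^ (-a) : ℝ) := by
  set c : ℕ → ℝ := fun l => (∏ j ∈ range l, (a + j)) / l.factorial with hc
  set k : ℕ := ⌈|a|⌉₊ with hk
  have hak : |a| ≤ (k : ℝ) := Nat.le_ceil _
  have hcb : ∀ l, |c l| ≤ ((l + k).choose k : ℝ) := by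
    intro l
    have h0 := coef_bound a k hak l
    simp only [hc]
    rw [abs_div, abs_of_nonneg (by positivity : (0:ℝ) ≤ (l.factorial : ℝ))]
    exact h0
  -- summability of c l * y ^ l for |y| < 1
  have hsummable : ∀ y : ℝ, |y| < 1 → Summable (fun l => c l * y ^ l) := by
    intro y hy
    have h1 : Summable (fun l : ℕ => ((l + k).choose k : ℝ) * |y| ^ l) :=
      summable_choose_mul_geometric_of_norm_lt_one k (by rwa [Real.norm_eq_abs, abs_abs])
    refine Summable.of_norm_bounded h1 fun l => ?_
    rw [norm_mul, norm_pow, Real.norm_eq_abs, Real.norm_eq_abs]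
    exact mul_le_mul_of_nonneg_right (hcb l) (by positivity)
  set r : ℝ := (1 + |z|) / 2 with hr
  have hr0 : 0 < r := by positivity
  have hzr : |z| < r := by rw [hr]; linarith
  have hr1 : r < 1 := by rw [hr]; linarith
  -- derivative bound
  set u : ℕ → ℝ := fun l => ((k:ℝ)+1) / r * (((l + (k+1)).choose (k+1) : ℝ) * r ^ l) with hu
  have hus : Summable u := by
    apply Summable.mul_left
    exact summable_choose_mul_geometric_of_norm_lt_one (k+1)
      (by rw [Real.norm_eq_abs, abs_of_pos hr0]; exact hr1)
  have hub : ∀ (l : ℕ) (y : ℝ), y ∈ Set.Ioo (-r) r → ‖c l * ((l:ℝ) * y ^ (l-1))‖ ≤ u l := by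
    intro l y hy
    have hyr : |y| ≤ r := by
      rw [abs_le]; exact ⟨(hy.1).le, (hy.2).le⟩
    have nat_id : (l + k + 1) * (l+k).choose k = ((l+(k+1)).choose (k+1)) * (k + 1) := by
      have h := Nat.add_one_mul_choose_eq (l+k) k
      rw [show l+(k+1) = l+k+1 by omega]
      exact h
    have cast_id : ((l:ℝ)+k+1) * ((l+k).choose k : ℝ) = (((l+(k+1)).choose (k+1) : ℝ)) * ((k:ℝ) + 1) := by
      have := congrArg (fun n : ℕ => (n : ℝ)) nat_id
      push_cast at this
      linarith
    rw [norm_mul, norm_mul, norm_pow, Real.norm_eq_abs, Real.norm_eq_abs, Real.norm_eq_abs]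
    rw [abs_of_nonneg (by positivity : (0:ℝ) ≤ (l:ℝ))]
    calc |c l| * ((l:ℝ) * |y| ^ (l-1))
        ≤ ((l+k).choose k : ℝ) * (((l:ℝ)+k+1) * r ^ (l-1)) := by
          apply mul_le_mul (hcb l) ?_ (by positivity) (by positivity)
          apply mul_le_mul (by linarith [Nat.cast_nonneg (α := ℝ) k] : (l:ℝ) ≤ (l:ℝ)+k+1)
            (pow_le_pow_left₀ (abs_nonneg _) hyr _) (by positivity) (by positivity)
      _ = (((l+(k+1)).choose (k+1) : ℝ)) * ((k:ℝ) + 1) * r ^ (l-1) := by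
          rw [← cast_id]; ring
      _ ≤ u l := by
          rw [hu]
          simp only
          rw [div_mul_eq_mul_div, mul_comm (((k:ℝ)+1)) _, mul_assoc]
          rw [le_div_iff₀ hr0]
          have : r ^ (l-1) * r ≤ r ^ l := by
            rcases Nat.eq_zero_or_pos l with h0 | h0
            · subst h0; simp; nlinarith
            · rw [← pow_succ]
              rw [show l - 1 + 1 = l from Nat.succ_pred_eq_of_pos h0]
          have h2 := mul_le_mul_of_nonneg_left this
            (by positivity : (0:ℝ) ≤ ((((l+(k+1)).choose (k+1)):ℕ):ℝ) * ((k:ℝ)+1))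
          nlinarith [h2]
  set f : ℝ → ℝ := fun y => ∑' l, c l * y ^ l with hf
  have hmem0 : (0:ℝ) ∈ Set.Ioo (-r) r := ⟨by linarith, hr0⟩
  have hderiv : ∀ y ∈ Set.Ioo (-r) r, HasDerivAt f (∑' l, c l * ((l:ℝ) * y ^ (l-1))) y := by
    intro y hy
    exact hasDerivAt_tsum_of_isPreconnected hus isOpen_Ioo (convex_Ioo _ _).isPreconnected
      (fun l y' _ => by simpa using ((hasDerivAt_pow l y').const_mul (c l)))
      hub hmem0 (hsummable 0 (by simp)) hy
  have habs_lt : ∀ y ∈ Set.Ioo (-r) r, |y| < 1 := by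
    intro y hy
    rw [abs_lt]; constructor <;> [linarith [hy.1]; linarith [hy.2]]
  have key : ∀ y ∈ Set.Ioo (-r) r,
      (1 - y) * (∑' l, c l * ((l:ℝ) * y ^ (l-1))) = a * f y := by
    intro y hy
    have s0 : Summable (fun l => c l * y ^ l) := hsummable y (habs_lt y hy)
    have s1 : Summable (fun l => c l * ((l:ℝ) * y ^ (l-1))) :=
      Summable.of_norm_bounded hus (fun l => hub l y hy)
    have hcoef : ∀ l : ℕ, c (l+1) * (((l:ℕ):ℝ)+1) = c l * (a + l) := by
      intro l
      simp only [hc]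
      rw [Finset.prod_range_succ, Nat.factorial_succ]
      have h1 : ((l:ℝ)+1) ≠ 0 := by positivity
      have h2 : ((l.factorial : ℕ):ℝ) ≠ 0 := Nat.cast_ne_zero.2 l.factorial_ne_zero
      push_cast
      field_simp
    have e_shift : ∑' l, c l * ((l:ℝ) * y ^ (l-1)) = ∑' l : ℕ, c l * (a + l) * y ^ l := by
      rw [Summable.tsum_eq_zero_add s1]
      simp only [Nat.cast_zero, zero_mul, mul_zero, zero_add, Nat.add_sub_cancel]
      congr 1
      funext l
      push_cast
      calc c (l+1) * (((l:ℝ)+1) * y ^ l) = (c (l+1) * (((l:ℕ):ℝ)+1)) * y ^ l := by push_cast; ring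
        _ = c l * (a + l) * y ^ l := by rw [hcoef l]
    have s2 : Summable (fun l : ℕ => c l * (a + l) * y ^ l) := by
      have := (summable_nat_add_iff 1).2 s1
      apply this.congr
      intro l
      simp only [Nat.add_sub_cancel]
      calc c (l+1) * (((l+1:ℕ):ℝ) * y ^ l) = (c (l+1) * (((l:ℕ):ℝ)+1)) * y ^ l := by push_cast; ring
        _ = c l * (a + l) * y ^ l := by rw [hcoef l]
    have emul : ∀ l : ℕ, y * (c l * ((l:ℝ) * y ^ (l-1))) = c l * (l:ℝ) * y ^ l := by
      intro l
      cases l with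
      | zero => simp
      | succ n => simp only [Nat.add_sub_cancel, pow_succ]; push_cast; ring
    have s3 : Summable (fun l : ℕ => c l * (l:ℝ) * y ^ l) := by
      apply (s1.mul_left y).congr
      intro l; exact emul l
    have hymul : y * (∑' l, c l * ((l:ℝ) * y ^ (l-1))) = ∑' l : ℕ, c l * (l:ℝ) * y ^ l := by
      rw [← tsum_mul_left]
      congr 1; funext l; exact emul l
    have expand : (1 - y) * (∑' l, c l * ((l:ℝ) * y ^ (l-1)))
        = (∑' l, c l * ((l:ℝ) * y ^ (l-1))) - y * (∑' l, c l * ((l:ℝ) * y ^ (l-1))) := by ring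
    rw [expand, hymul, e_shift, ← Summable.tsum_sub s2 s3]
    have : ∀ l : ℕ, c l * (a + l) * y ^ l - c l * (l:ℝ) * y ^ l = a * (c l * y ^ l) := by
      intro l; ring
    rw [tsum_congr this, tsum_mul_left]
  -- the function F := f * (1-·)^a has zero derivative on Ioo (-r) r
  set F : ℝ → ℝ := fun y => f y * (1 - y) ^ a with hF
  have hF' : ∀ y ∈ Set.Ioo (-r) r, HasDerivAt F 0 y := by
    intro y hy
    have h1y : 0 < 1 - y := by have := hy.2; linarith
    have hd1 := hderiv y hy
    have hbase : HasDerivAt (fun y : ℝ => 1 - y) (-1) y := by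
      simpa using (hasDerivAt_id y).const_sub 1
    have hd2 : HasDerivAt (fun y : ℝ => (1 - y) ^ a) (-1 * a * (1-y) ^ (a-1)) y :=
      hbase.rpow_const (Or.inl h1y.ne')
    have hmul := hd1.mul hd2
    refine hmul.congr_deriv ?_
    symm
    have hrw : (1-y) ^ a = (1-y) ^ (a-1) * (1-y) := by
      rw [← Real.rpow_add_one h1y.ne' (a-1)]; ring_nf
    rw [hrw]
    have hkey := key y hy
    linear_combination (-(1-y) ^ (a-1)) * hkey
  -- F is constant on the segment from 0 to z
  have hIcc : Set.Icc (min z 0) (max z 0) ⊆ Set.Ioo (-r) r := by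
    intro y hy
    rcases hy with ⟨h1, h2⟩
    have hz1 : -r < min z 0 := by
      rcases abs_lt.1 hzr with ⟨hl, hrr⟩
      simp only [lt_min_iff]; exact ⟨hl, by linarith⟩
    have hz2 : max z 0 < r := by
      rcases abs_lt.1 hzr with ⟨hl, hrr⟩
      simp only [max_lt_iff]; exact ⟨hrr, hr0⟩
    exact ⟨lt_of_lt_of_le hz1 h1, lt_of_le_of_lt h2 hz2⟩
  have hconst : ∀ x ∈ Set.Icc (min z 0) (max z 0), F x = F (min z 0) := by
    apply constant_of_has_deriv_right_zero
    · intro y hy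
      exact ((hF' y (hIcc hy)).continuousAt).continuousWithinAt
    · intro y hy
      exact (hF' y (hIcc (Set.Ico_subset_Icc_self hy))).hasDerivWithinAt
  have hzmem : z ∈ Set.Icc (min z 0) (max z 0) := ⟨min_le_left _ _, le_max_left _ _⟩
  have h0mem : (0:ℝ) ∈ Set.Icc (min z 0) (max z 0) := ⟨min_le_right _ _, le_max_right _ _⟩
  have hFz0 : F z = F 0 := by rw [hconst z hzmem, hconst 0 h0mem]
  have hF0 : F 0 = 1 := by
    simp only [hF, hf]
    have : ∑' l : ℕ, c l * (0:ℝ) ^ l = 1 := by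
      rw [tsum_eq_single 0 (fun b hb => by simp [zero_pow hb])]
      simp [hc]
    rw [this]
    simp [Real.one_rpow]
  have h1z : 0 < 1 - z := by
    rcases abs_lt.1 hz with ⟨_, h2⟩; linarith
  have hfz : f z = (1 - z) ^ (-a) := by
    have hFz : f z * (1 - z) ^ a = 1 := by
      have hh : F z = 1 := hFz0.trans hF0
      simpa only [hF] using hh
    rw [Real.rpow_neg h1z.le]
    have := inv_eq_of_mul_eq_one_right (by rw [mul_comm] at hFz; exact hFz)
    linarith [this]
  have hS := hsummable z hz
  have := hS.hasSum
  rw [show (∑' l, c l * z ^ l) = f z from rfl, hfz] at this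
  exact this

lemma Gamma_shift (x : ℝ) (hx : 0 < x) (t : ℕ) :
    Real.Gamma (x + t) = Real.Gamma x * ∏ j ∈ range t, (x + j) := by
  induction t with
  | zero => simp
  | succ t ih =>
    have hxt : x + (t:ℝ) ≠ 0 := by positivity
    rw [show x + ((t+1:ℕ):ℝ) = (x + t) + 1 by push_cast; ring,
      Real.Gamma_add_one hxt, ih, Finset.prod_range_succ]
    push_cast
    ring

lemma Ikl_eq (k l : ℕ) (β : ℝ) (hβ : -1 < β) :
    Ikl k l β = ∑ t ∈ Finset.range (k+1), ∑ m ∈ Finset.range (l+1),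
      ((-1:ℝ)^t * (k.choose t : ℝ) / t.factorial) * ((-1:ℝ)^m * (l.choose m : ℝ) / m.factorial) *
        Real.Gamma (β + 1 + t + m) := by
  have hpos : ∀ t m : ℕ, (0:ℝ) < β + 1 + t + m := by
    intro t m
    have h1 : (0:ℝ) ≤ (t:ℝ) := Nat.cast_nonneg t
    have h2 : (0:ℝ) ≤ (m:ℝ) := Nat.cast_nonneg m
    linarith
  have hint : ∀ t m : ℕ, MeasureTheory.IntegrableOn
      (fun q : ℝ => Real.exp (-q) * q ^ (β + (t:ℝ) + m)) (Set.Ioi 0) := by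
    intro t m
    have h := Real.GammaIntegral_convergent (hpos t m)
    simpa [show β + 1 + (t:ℝ) + m - 1 = β + t + m by ring] using h
  have hval : ∀ t m : ℕ, (∫ q in Set.Ioi (0:ℝ), Real.exp (-q) * q ^ (β + (t:ℝ) + m))
      = Real.Gamma (β + 1 + t + m) := by
    intro t m
    rw [Real.Gamma_eq_integral (hpos t m)]
    simp [show β + 1 + (t:ℝ) + m - 1 = β + t + m by ring]
  rw [Ikl]
  have congr_int : ∀ q ∈ Set.Ioi (0:ℝ), Real.exp (-q) * q ^ β * laguerre k q * laguerre l q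
      = ∑ t ∈ range (k+1), ∑ m ∈ range (l+1),
          ((-1:ℝ)^t * (k.choose t : ℝ) / t.factorial) * ((-1:ℝ)^m * (l.choose m : ℝ) / m.factorial) *
            (Real.exp (-q) * q ^ (β + (t:ℝ) + m)) := by
    intro q hq
    have hq0 : (0:ℝ) < q := hq
    rw [laguerre, laguerre, mul_assoc, Finset.sum_mul_sum, Finset.mul_sum]
    refine Finset.sum_congr rfl fun t _ => ?_
    rw [Finset.mul_sum]
    refine Finset.sum_congr rfl fun m _ => ?_
    have e1 : q ^ (t:ℕ) = q ^ ((t:ℕ):ℝ) := (Real.rpow_natCast q t).symm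
    have e2 : q ^ (m:ℕ) = q ^ ((m:ℕ):ℝ) := (Real.rpow_natCast q m).symm
    have e3 : q ^ β * q ^ ((t:ℕ):ℝ) * q ^ ((m:ℕ):ℝ) = q ^ (β + (t:ℝ) + m) := by
      rw [← Real.rpow_add hq0, ← Real.rpow_add hq0]
    rw [e1, e2, ← e3]
    ring
  rw [MeasureTheory.setIntegral_congr_fun measurableSet_Ioi congr_int]
  rw [MeasureTheory.integral_finset_sum _ (fun t _ => MeasureTheory.integrable_finset_sum _
    (fun m _ => ((hint t m).const_mul _)))]
  refine Finset.sum_congr rfl fun t _ => ?_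
  rw [MeasureTheory.integral_finset_sum _ (fun m _ => ((hint t m).const_mul _))]
  refine Finset.sum_congr rfl fun m _ => ?_
  rw [MeasureTheory.integral_const_mul, hval t m]

lemma prod_one_add_eq_factorial (l : ℕ) :
    (∏ j ∈ range l, (((0:ℕ):ℝ) + 1 + j)) = (l.factorial : ℝ) := by
  induction l with
  | zero => simp
  | succ l ih => rw [Finset.prod_range_succ, ih, Nat.factorial_succ]; push_cast; ring

theorem Ikl_generating_function (k : ℕ) (β z : ℝ) (hβ : -1 < β) (hz : |z| < 1) :
    HasSum (fun l : ℕ => Ikl k l β * z ^ l)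
      (Real.Gamma (β + 1) *
        ∑ t ∈ Finset.range (k + 1),
          (-1) ^ t * (k.choose t : ℝ) * (∏ j ∈ Finset.range t, (β + 1 + j)) /
            (t.factorial : ℝ) * (1 - z) ^ ((t : ℝ) + β)) := by
  have hβ1 : (0:ℝ) < β + 1 := by linarith
  have hIl : ∀ l : ℕ, Ikl k l β * z ^ l
      = ∑ t ∈ range (k+1), (((-1:ℝ)^t * (k.choose t : ℝ) / t.factorial) * Real.Gamma (β+1+t))
          * ((∏ j ∈ range l, (-(β + (t:ℝ)) + j)) / l.factorial * z ^ l) := by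
    intro l
    rw [Ikl_eq k l β hβ, Finset.sum_mul]
    refine Finset.sum_congr rfl fun t _ => ?_
    have ht0 : (0:ℝ) ≤ (t:ℝ) := Nat.cast_nonneg t
    have hx : (0:ℝ) < β + 1 + t := by linarith
    have inner0 : ∑ m ∈ range (l+1),
        ((-1:ℝ)^t * (k.choose t : ℝ) / t.factorial) * ((-1:ℝ)^m * (l.choose m : ℝ) / m.factorial) *
          Real.Gamma (β + 1 + t + m)
        = (((-1:ℝ)^t * (k.choose t : ℝ) / t.factorial) * Real.Gamma (β+1+t)) *
            ∑ m ∈ range (l+1), (-1:ℝ)^m * (l.choose m : ℝ) *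
              (∏ j ∈ range m, ((β + 1 + (t:ℝ)) + j)) *
              (((0:ℕ).factorial : ℝ) / (((m+0:ℕ)).factorial : ℝ)) := by
      rw [Finset.mul_sum]
      refine Finset.sum_congr rfl fun m _ => ?_
      rw [Gamma_shift (β + 1 + (t:ℝ)) hx m]
      simp only [Nat.factorial_zero, Nat.add_zero, Nat.cast_one]
      ring
    rw [inner0, S_identity l (β + 1 + (t:ℝ)) 0]
    have hnum : (∏ j ∈ range l, (((0:ℕ):ℝ) + 1 - (β + 1 + (t:ℝ)) + j))
        = ∏ j ∈ range l, (-(β + (t:ℝ)) + j) := by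
      refine Finset.prod_congr rfl fun x _ => ?_
      push_cast; ring
    rw [hnum, prod_one_add_eq_factorial l]
    ring
  have hterm : ∀ t ∈ range (k+1),
      HasSum (fun l : ℕ => (((-1:ℝ)^t * (k.choose t : ℝ) / t.factorial) * Real.Gamma (β+1+t))
          * ((∏ j ∈ range l, (-(β + (t:ℝ)) + j)) / l.factorial * z ^ l))
        ((((-1:ℝ)^t * (k.choose t : ℝ) / t.factorial) * Real.Gamma (β+1+t)) *
          (1 - z) ^ ((t:ℝ) + β)) := by
    intro t _
    have h := (binomial_hasSum (-(β + (t:ℝ))) hz).mul_left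
      (((-1:ℝ)^t * (k.choose t : ℝ) / t.factorial) * Real.Gamma (β+1+t))
    rw [show -(-(β + (t:ℝ))) = (t:ℝ) + β by ring] at h
    exact h
  have total := hasSum_sum hterm
  have val_eq : ∑ t ∈ range (k+1), (((-1:ℝ)^t * (k.choose t : ℝ) / t.factorial) *
        Real.Gamma (β+1+t)) * (1 - z) ^ ((t:ℝ) + β)
      = Real.Gamma (β + 1) * ∑ t ∈ Finset.range (k + 1),
          (-1) ^ t * (k.choose t : ℝ) * (∏ j ∈ Finset.range t, (β + 1 + j)) /
            (t.factorial : ℝ) * (1 - z) ^ ((t : ℝ) + β) := by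
    rw [Finset.mul_sum]
    refine Finset.sum_congr rfl fun t _ => ?_
    rw [Gamma_shift (β + 1) hβ1 t]
    ring
  rw [show (fun l : ℕ => Ikl k l β * z ^ l) = fun l : ℕ =>
    ∑ t ∈ range (k+1), (((-1:ℝ)^t * (k.choose t : ℝ) / t.factorial) * Real.Gamma (β+1+t))
      * ((∏ j ∈ range l, (-(β + (t:ℝ)) + j)) / l.factorial * z ^ l) from funext hIl, ← val_eq]
  exact total
end

section
/- For every μ ≥ 1, ∫_{q ∈ (0,∞)^μ} (∑_{i ≠ j} Real.sqrt (q i * q j)) · (∏_{i < j} (q i − q j)²) · exp (−∑ m, q m) dq = Q̄_μ · ∑_{k=0}^{μ−1} ∑_{l=0}^{μ−1} ( I_{k k}^{(1/2)} · I_{l l}^{(1/2)} − (I_{k l}^{(1/2)})² ), where the outer sum on the left is over all ordered pairs (i, j) of distinct indices in Fin μ. -/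
open scoped BigOperators

/-- `Q̄_μ = μ! ∏_{k=0}^{μ-1} (k!)²`. -/
noncomputable def Qbar (μ : ℕ) : ℝ :=
  (μ.factorial : ℝ) * ∏ k ∈ Finset.range μ, ((k.factorial : ℝ)) ^ 2

open Finset MeasureTheory

/-- key alternating identity 1 -/
lemma alt1 (k r : ℕ) :
    ∑ a ∈ range (k+1), (-1:ℝ)^a * (k.choose a) * (a.choose r)
      = (-1:ℝ)^k * (if r = k then 1 else 0) := by
  by_cases hrk : r ≤ k
  · have h0 : ∀ a ∈ range (k+1), a ∉ Finset.Ico r (k+1) →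
        (-1:ℝ)^a * (k.choose a) * (a.choose r) = 0 := by
      intro a ha hna
      simp only [mem_range] at ha
      simp only [Finset.mem_Ico, not_and, not_lt] at hna
      have : a < r := by
        by_contra h
        exact absurd ha (not_lt.mpr (hna (not_lt.mp h)))
      rw [Nat.choose_eq_zero_of_lt this]; simp
    have hsub : Finset.Ico r (k+1) ⊆ range (k+1) := by
      intro a ha; simp only [Finset.mem_Ico] at ha; simp [ha.2]
    rw [← Finset.sum_subset hsub h0, Finset.sum_Ico_eq_sum_range]
    have hk1 : k + 1 - r = (k - r) + 1 := by omega
    rw [hk1]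
    have : ∀ c ∈ range (k - r + 1),
        (-1:ℝ)^(r+c) * (k.choose (r+c)) * ((r+c).choose r)
          = ((-1:ℝ)^r * (k.choose r)) * ((-1:ℝ)^c * ((k-r).choose c)) := by
      intro c hc
      simp only [mem_range] at hc
      have h1 : r + c ≤ k := by omega
      have h2 : r ≤ r + c := Nat.le_add_right r c
      have := Nat.choose_mul (n := k) h2
      simp only [Nat.add_sub_cancel_left] at this
      have hcast : (k.choose (r+c) : ℝ) * ((r+c).choose r : ℝ)
          = (k.choose r : ℝ) * ((k-r).choose c : ℝ) := by
        exact_mod_cast congrArg (Nat.cast : ℕ → ℝ) this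
      rw [pow_add]
      linear_combination ((-1:ℝ)^r * (-1:ℝ)^c) * hcast
    rw [Finset.sum_congr rfl this, ← Finset.mul_sum]
    have halt : ∑ c ∈ range (k - r + 1), (-1:ℝ)^c * ((k-r).choose c)
        = if k - r = 0 then 1 else 0 := by
      have := @Int.alternating_sum_range_choose (k - r)
      exact_mod_cast congrArg (Int.cast : ℤ → ℝ) this
    rw [halt]
    by_cases h : r = k
    · subst h; simp
    · have : k - r ≠ 0 := by omega
      simp [this, h]
  · have : ∀ a ∈ range (k+1), (-1:ℝ)^a * (k.choose a) * (a.choose r) = 0 := by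
      intro a ha
      simp only [mem_range] at ha
      have har : a < r := by omega
      rw [Nat.choose_eq_zero_of_lt har]; simp
    rw [Finset.sum_congr rfl this]
    have : r ≠ k := by omega
    simp [this]

/-- key alternating identity 2 -/
lemma alt2 (m k : ℕ) :
    ∑ a ∈ range (k+1), (-1:ℝ)^a * (k.choose a) * ((m+a).choose m)
      = (-1:ℝ)^k * (m.choose k) := by
  have expand : ∀ a, ((m+a).choose m : ℝ)
      = ∑ i ∈ range (m+1), (m.choose i : ℝ) * (a.choose (m - i)) := by
    intro a
    have := Nat.add_choose_eq m a m
    rw [Finset.Nat.sum_antidiagonal_eq_sum_range_succ (fun i j => m.choose i * a.choose j)] at this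
    exact_mod_cast congrArg (Nat.cast : ℕ → ℝ) this
  calc ∑ a ∈ range (k+1), (-1:ℝ)^a * (k.choose a) * ((m+a).choose m)
      = ∑ a ∈ range (k+1), ∑ i ∈ range (m+1),
          (m.choose i : ℝ) * ((-1:ℝ)^a * (k.choose a) * (a.choose (m-i))) := by
        refine Finset.sum_congr rfl fun a _ => ?_
        rw [expand a, Finset.mul_sum]
        refine Finset.sum_congr rfl fun i _ => by ring
    _ = ∑ i ∈ range (m+1), (m.choose i : ℝ) *
          ∑ a ∈ range (k+1), (-1:ℝ)^a * (k.choose a) * (a.choose (m-i)) := by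
        rw [Finset.sum_comm]
        exact Finset.sum_congr rfl fun i _ => by rw [Finset.mul_sum]
    _ = ∑ i ∈ range (m+1), (m.choose i : ℝ) * ((-1:ℝ)^k * (if m - i = k then 1 else 0)) := by
        exact Finset.sum_congr rfl fun i _ => by rw [alt1]
    _ = (-1:ℝ)^k * (m.choose k) := by
        by_cases hkm : k ≤ m
        · rw [Finset.sum_eq_single (m - k)]
          · have : m - (m - k) = k := by omega
            rw [if_pos this, Nat.choose_symm hkm]
            · ring
          · intro i hi hne
            simp only [mem_range] at hi
            have : m - i ≠ k := by omega
            simp [this]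
          · intro h; exact absurd (by simp : m - k ∈ range (m+1)) h
        · have h1 : ∀ i ∈ range (m+1), (m.choose i : ℝ) * ((-1:ℝ)^k * (if m - i = k then 1 else 0)) = 0 := by
            intro i hi
            have : m - i ≠ k := by omega
            simp [this]
          rw [Finset.sum_congr rfl h1, Finset.sum_const, smul_zero,
            Nat.choose_eq_zero_of_lt (by omega)]
          simp

open Set in
lemma integrableOn_exp_pow (n : ℕ) :
    IntegrableOn (fun x => Real.exp (-x) * x ^ n) (Ioi (0:ℝ)) := by
  have h := Real.GammaIntegral_convergent (s := (n:ℝ)+1) (by positivity)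
  refine (h.congr_fun (fun x hx => ?_) measurableSet_Ioi)
  have hx' : (0:ℝ) < x := hx
  beta_reduce; rw [add_sub_cancel_right, Real.rpow_natCast]

open Set in
lemma integral_exp_pow (n : ℕ) :
    ∫ x in Ioi (0:ℝ), Real.exp (-x) * x ^ n = (n.factorial : ℝ) := by
  have h := Real.Gamma_eq_integral (s := (n:ℝ)+1) (by positivity)
  have h2 : Real.Gamma ((n:ℝ)+1) = (n.factorial : ℝ) := by
    exact_mod_cast Real.Gamma_nat_eq_factorial n
  rw [← h2, h]
  refine setIntegral_congr_fun measurableSet_Ioi (fun x hx => ?_)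
  rw [add_sub_cancel_right, Real.rpow_natCast]

open Set in
lemma integrableOn_exp_sqrt_pow (n : ℕ) :
    IntegrableOn (fun x => Real.exp (-x) * (Real.sqrt x * x ^ n)) (Ioi (0:ℝ)) := by
  have h := Real.GammaIntegral_convergent (s := (n:ℝ)+1+1/2) (by positivity)
  refine (h.congr_fun (fun x hx => ?_) measurableSet_Ioi)
  have hx' : (0:ℝ) < x := hx
  have : (n:ℝ)+1+1/2-1 = 1/2 + n := by ring
  beta_reduce; rw [this, Real.rpow_add hx', Real.rpow_natCast, ← Real.sqrt_eq_rpow]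

open Set in
lemma integral_exp_sqrt_pow (n : ℕ) :
    ∫ x in Ioi (0:ℝ), Real.exp (-x) * (Real.sqrt x * x ^ n)
      = ∫ x in Ioi (0:ℝ), Real.exp (-x) * (x ^ ((1:ℝ)/2) * x ^ n) := by
  refine setIntegral_congr_fun measurableSet_Ioi (fun x hx => ?_)
  rw [Real.sqrt_eq_rpow]

open Set Polynomial in
lemma integrableOn_exp_poly (p : Polynomial ℝ) :
    IntegrableOn (fun x => Real.exp (-x) * p.eval x) (Ioi (0:ℝ)) := by
  have : (fun x => Real.exp (-x) * p.eval x)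
      = fun x => ∑ i ∈ range (p.natDegree+1), p.coeff i * (Real.exp (-x) * x ^ i) := by
    funext x
    rw [Polynomial.eval_eq_sum_range, Finset.mul_sum]
    exact Finset.sum_congr rfl fun i _ => by ring
  rw [this]
  exact integrable_finset_sum _ fun i _ => (integrableOn_exp_pow i).const_mul _

open Set Polynomial in
lemma integrableOn_exp_sqrt_poly (p : Polynomial ℝ) :
    IntegrableOn (fun x => Real.exp (-x) * (Real.sqrt x * p.eval x)) (Ioi (0:ℝ)) := by
  have : (fun x => Real.exp (-x) * (Real.sqrt x * p.eval x))
      = fun x => ∑ i ∈ range (p.natDegree+1), p.coeff i * (Real.exp (-x) * (Real.sqrt x * x ^ i)) := by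
    funext x
    rw [Polynomial.eval_eq_sum_range, Finset.mul_sum, Finset.mul_sum]
    exact Finset.sum_congr rfl fun i _ => by ring
  rw [this]
  exact integrable_finset_sum _ fun i _ => (integrableOn_exp_sqrt_pow i).const_mul _

noncomputable def lagP (n : ℕ) : Polynomial ℝ :=
  ∑ k ∈ range (n+1), Polynomial.C ((-1:ℝ)^k * (n.choose k : ℝ) / (k.factorial : ℝ)) * Polynomial.X ^ k

open Polynomial in
lemma eval_lagP (n : ℕ) (x : ℝ) : (lagP n).eval x = laguerre n x := by
  rw [lagP, laguerre, Polynomial.eval_finset_sum]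
  exact Finset.sum_congr rfl fun k _ => by simp; ring

open Set in
lemma integrableOn_A (k l : ℕ) :
    IntegrableOn (fun x => Real.exp (-x) * laguerre k x * laguerre l x) (Ioi (0:ℝ)) := by
  refine (integrableOn_exp_poly (lagP k * lagP l)).congr_fun (fun x _ => ?_) measurableSet_Ioi
  beta_reduce; rw [Polynomial.eval_mul, eval_lagP, eval_lagP]; ring

open Set in
lemma integrableOn_B (k l : ℕ) :
    IntegrableOn (fun x => Real.sqrt x * (Real.exp (-x) * laguerre k x * laguerre l x))
      (Ioi (0:ℝ)) := by
  refine (integrableOn_exp_sqrt_poly (lagP k * lagP l)).congr_fun (fun x _ => ?_) measurableSet_Ioi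
  beta_reduce; rw [Polynomial.eval_mul, eval_lagP, eval_lagP]; ring

open Set in
lemma integrableOn_exp_pow_lag (m k : ℕ) :
    IntegrableOn (fun x => Real.exp (-x) * x ^ m * laguerre k x) (Ioi (0:ℝ)) := by
  refine (integrableOn_exp_poly (Polynomial.X ^ m * lagP k)).congr_fun (fun x _ => ?_)
    measurableSet_Ioi
  beta_reduce; rw [Polynomial.eval_mul, Polynomial.eval_pow, Polynomial.eval_X, eval_lagP]; ring

open Set in
lemma integral_exp_pow_lag (m k : ℕ) :
    ∫ x in Ioi (0:ℝ), Real.exp (-x) * x ^ m * laguerre k x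
      = (-1:ℝ)^k * (m.choose k : ℝ) * (m.factorial : ℝ) := by
  have heq : Set.EqOn (fun x => Real.exp (-x) * x ^ m * laguerre k x)
      (fun x => ∑ a ∈ range (k+1),
        ((-1:ℝ)^a * (k.choose a : ℝ) / (a.factorial : ℝ)) * (Real.exp (-x) * x ^ (m+a)))
      (Ioi (0:ℝ)) := by
    intro x _
    simp only [laguerre, Finset.mul_sum]
    exact Finset.sum_congr rfl fun a _ => by rw [pow_add]; ring
  rw [setIntegral_congr_fun measurableSet_Ioi heq,
    integral_finset_sum _ fun a _ => (integrableOn_exp_pow (m+a)).const_mul _]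
  have : ∀ a ∈ range (k+1),
      ∫ x in Ioi (0:ℝ), ((-1:ℝ)^a * (k.choose a : ℝ) / (a.factorial : ℝ))
        * (Real.exp (-x) * x ^ (m+a))
      = ((-1:ℝ)^a * (k.choose a : ℝ) * ((m+a).choose m : ℝ)) * (m.factorial : ℝ) := by
    intro a _
    rw [MeasureTheory.integral_const_mul, integral_exp_pow]
    have hfac : ((m+a).factorial : ℝ) = ((m+a).choose m : ℝ) * (m.factorial : ℝ) * (a.factorial : ℝ) := by
      have h0 := Nat.add_choose_mul_factorial_mul_factorial m a
      rw [← Nat.choose_symm_add] at h0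
      exact_mod_cast congrArg (Nat.cast : ℕ → ℝ) h0.symm
    rw [hfac]
    have ha : (a.factorial : ℝ) ≠ 0 := Nat.cast_ne_zero.mpr a.factorial_ne_zero
    field_simp
  rw [Finset.sum_congr rfl this, ← Finset.sum_mul]
  have := alt2 m k
  rw [this]

open Set in
lemma lag_orth (k l : ℕ) :
    ∫ x in Ioi (0:ℝ), Real.exp (-x) * laguerre k x * laguerre l x
      = if k = l then 1 else 0 := by
  have heq : Set.EqOn (fun x => Real.exp (-x) * laguerre k x * laguerre l x)
      (fun x => ∑ b ∈ range (l+1),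
        ((-1:ℝ)^b * (l.choose b : ℝ) / (b.factorial : ℝ)) * (Real.exp (-x) * x ^ b * laguerre k x))
      (Ioi (0:ℝ)) := by
    intro x _
    simp only []
    conv_lhs => rw [show laguerre l x = ∑ b ∈ range (l+1),
      (-1:ℝ)^b * (l.choose b : ℝ) * x ^ b / (b.factorial : ℝ) from rfl]
    rw [Finset.mul_sum]
    exact Finset.sum_congr rfl fun b _ => by ring
  rw [setIntegral_congr_fun measurableSet_Ioi heq,
    integral_finset_sum _ fun b _ => (integrableOn_exp_pow_lag b k).const_mul _]
  have hterm : ∀ b ∈ range (l+1),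
      ∫ x in Ioi (0:ℝ), ((-1:ℝ)^b * (l.choose b : ℝ) / (b.factorial : ℝ))
        * (Real.exp (-x) * x ^ b * laguerre k x)
      = (-1:ℝ)^k * ((-1:ℝ)^b * (l.choose b : ℝ) * (b.choose k : ℝ)) := by
    intro b _
    rw [MeasureTheory.integral_const_mul, integral_exp_pow_lag]
    have hb : (b.factorial : ℝ) ≠ 0 := Nat.cast_ne_zero.mpr b.factorial_ne_zero
    field_simp
  rw [Finset.sum_congr rfl hterm, ← Finset.mul_sum, alt1 l k]
  by_cases h : k = l
  · subst h
    simp only [if_pos, eq_self_iff_true, if_true, mul_one, ← pow_add, ← two_mul, pow_mul,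
      neg_one_sq, one_pow]
  · have h' : ¬ (k = l) := h
    simp only [if_neg h', mul_zero]

noncomputable def mP (j : ℕ) : Polynomial ℝ :=
  Polynomial.C ((-1:ℝ)^j * (j.factorial : ℝ)) * lagP j

open Polynomial in
lemma lagP_coeff (n b : ℕ) :
    (lagP n).coeff b = if b ∈ range (n+1) then (-1:ℝ)^b * (n.choose b : ℝ) / (b.factorial : ℝ)
      else 0 := by
  rw [lagP, Polynomial.finset_sum_coeff]
  have : ∀ k ∈ range (n+1), (Polynomial.C ((-1:ℝ)^k * (n.choose k : ℝ) / (k.factorial : ℝ))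
      * Polynomial.X ^ k).coeff b
      = if b = k then (-1:ℝ)^b * (n.choose b : ℝ) / (b.factorial : ℝ) else 0 := by
    intro k _
    rw [Polynomial.coeff_C_mul, Polynomial.coeff_X_pow]
    by_cases h : b = k
    · subst h; simp
    · simp [h]
  rw [Finset.sum_congr rfl this, Finset.sum_ite_eq]

open Polynomial in
lemma lagP_natDegree_le (n : ℕ) : (lagP n).natDegree ≤ n := by
  refine Polynomial.natDegree_le_iff_coeff_eq_zero.mpr fun N hN => ?_
  rw [lagP_coeff]
  have : N ∉ range (n+1) := by simp; omega
  simp [this]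

open Polynomial in
lemma mP_coeff_top (j : ℕ) : (mP j).coeff j = 1 := by
  rw [mP, Polynomial.coeff_C_mul, lagP_coeff]
  have h1 : j ∈ range (j+1) := by simp
  rw [if_pos h1, Nat.choose_self]
  have : ((j.factorial : ℝ)) ≠ 0 := Nat.cast_ne_zero.mpr j.factorial_ne_zero
  field_simp
  have h2 : (-1:ℝ)^j * (-1)^j = 1 := by
    rw [← pow_add, ← two_mul, pow_mul, neg_one_sq, one_pow]
  linear_combination h2

open Polynomial in
lemma mP_natDegree_le (j : ℕ) : (mP j).natDegree ≤ j := by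
  exact le_trans (Polynomial.natDegree_C_mul_le _ _) (lagP_natDegree_le j)

open Polynomial in
lemma mP_monic (j : ℕ) : (mP j).Monic :=
  Polynomial.monic_of_natDegree_le_of_coeff_eq_one j (mP_natDegree_le j) (mP_coeff_top j)

open Polynomial in
lemma mP_natDegree (j : ℕ) : (mP j).natDegree = j := by
  refine le_antisymm (mP_natDegree_le j) ?_
  refine Polynomial.le_natDegree_of_ne_zero ?_
  rw [mP_coeff_top]; exact one_ne_zero

open Polynomial in
lemma mP_eval (j : ℕ) (x : ℝ) : (mP j).eval x = ((-1:ℝ)^j * (j.factorial : ℝ)) * laguerre j x := by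
  rw [mP, Polynomial.eval_mul, Polynomial.eval_C, eval_lagP]

/-- the Laguerre matrix -/
noncomputable def Lmat {μ : ℕ} (q : Fin μ → ℝ) : Matrix (Fin μ) (Fin μ) ℝ :=
  Matrix.of fun i j : Fin μ => laguerre (i : ℕ) (q j)

lemma vandermonde_sq {μ : ℕ} (q : Fin μ → ℝ) :
    ∏ i, ∏ j ∈ Finset.Ioi i, (q i - q j)^2
      = (∏ j : Fin μ, (((j:ℕ).factorial : ℝ))^2) * ((Lmat q).det)^2 := by
  have h1 : ∏ i, ∏ j ∈ Finset.Ioi i, (q i - q j)^2 = ((Matrix.vandermonde q).det)^2 := by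
    rw [Matrix.det_vandermonde, ← Finset.prod_pow]
    refine Finset.prod_congr rfl fun i _ => ?_
    rw [← Finset.prod_pow]
    exact Finset.prod_congr rfl fun j _ => by ring
  have h2 : (Matrix.vandermonde q).det
      = (Matrix.of fun i j : Fin μ => (mP (j:ℕ)).eval (q i)).det :=
    Matrix.det_eval_matrixOfPolynomials_eq_det_vandermonde q (fun j => mP (j:ℕ))
      (fun j => mP_natDegree (j:ℕ)) (fun j => mP_monic (j:ℕ))
  have h4 : (Matrix.of fun i j : Fin μ => (mP (j:ℕ)).eval (q i)).det
      = (∏ j : Fin μ, ((-1:ℝ)^(j:ℕ) * ((j:ℕ).factorial : ℝ))) * (Lmat q).det := by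
    have h3 : (Matrix.of fun i j : Fin μ => (mP (j:ℕ)).eval (q i))
        = Matrix.of fun i j : Fin μ =>
            (fun j : Fin μ => ((-1:ℝ)^(j:ℕ) * ((j:ℕ).factorial : ℝ))) j
              * (Matrix.transpose (Lmat q)) i j := by
      ext i j
      simp [mP_eval, Lmat, Matrix.transpose]
    rw [h3, Matrix.det_mul_row, Matrix.det_transpose]
  rw [h1, h2, h4, mul_pow, ← Finset.prod_pow]
  congr 1
  refine Finset.prod_congr rfl fun j _ => ?_
  rw [mul_pow, ← pow_mul, mul_comm ((j:ℕ)) 2, pow_mul, neg_one_sq, one_pow, one_mul]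

open Equiv in
lemma Lmat_det_expand {μ : ℕ} (q : Fin μ → ℝ) :
    (Lmat q).det = ∑ σ : Perm (Fin μ), ((Perm.sign σ : ℤ) : ℝ)
      * ∏ i : Fin μ, laguerre ((σ i : Fin μ) : ℕ) (q i) := by
  rw [Matrix.det_apply']
  rfl

open Set MeasureTheory in
lemma orthant_eq (μ : ℕ) :
    {q : Fin μ → ℝ | ∀ i, 0 < q i} = Set.pi Set.univ (fun _ : Fin μ => Set.Ioi (0:ℝ)) := by
  ext q; simp [Set.mem_pi, Set.mem_Ioi]

open Set MeasureTheory in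
lemma orthant_measurable (μ : ℕ) : MeasurableSet {q : Fin μ → ℝ | ∀ i, 0 < q i} := by
  rw [orthant_eq]
  exact MeasurableSet.univ_pi fun _ => measurableSet_Ioi

open Set MeasureTheory in
lemma indicator_prod_orthant (μ : ℕ) (g : Fin μ → ℝ → ℝ) :
    Set.indicator {q : Fin μ → ℝ | ∀ i, 0 < q i} (fun q => ∏ i, g i (q i))
      = fun q => ∏ i, Set.indicator (Set.Ioi (0:ℝ)) (g i) (q i) := by
  funext q
  by_cases hq : q ∈ {q : Fin μ → ℝ | ∀ i, 0 < q i}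
  · rw [Set.indicator_of_mem hq]
    exact (Finset.prod_congr rfl fun i _ => (Set.indicator_of_mem (hq i) (g i)).symm)
  · rw [Set.indicator_of_notMem hq]
    obtain ⟨i, hi⟩ : ∃ i, ¬ (0 < q i) := by
      by_contra h
      push_neg at h
      exact hq h
    exact (Finset.prod_eq_zero (Finset.mem_univ i) (Set.indicator_of_notMem hi (g i))).symm

open Set MeasureTheory in
lemma integrableOn_prod_orthant (μ : ℕ) (g : Fin μ → ℝ → ℝ)
    (h : ∀ i, IntegrableOn (g i) (Set.Ioi (0:ℝ))) :
    IntegrableOn (fun q : Fin μ → ℝ => ∏ i, g i (q i)) {q : Fin μ → ℝ | ∀ i, 0 < q i} := by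
  rw [← integrable_indicator_iff (orthant_measurable μ), indicator_prod_orthant]
  exact Integrable.fintype_prod (f := fun i => Set.indicator (Set.Ioi (0:ℝ)) (g i))
    (fun i => (integrable_indicator_iff measurableSet_Ioi).mpr (h i))

open Set MeasureTheory in
lemma integral_prod_orthant (μ : ℕ) (g : Fin μ → ℝ → ℝ)
    (h : ∀ i, IntegrableOn (g i) (Set.Ioi (0:ℝ))) :
    ∫ q in {q : Fin μ → ℝ | ∀ i, 0 < q i}, ∏ i, g i (q i)
      = ∏ i, ∫ x in Set.Ioi (0:ℝ), g i x := by
  rw [← integral_indicator (orthant_measurable μ), indicator_prod_orthant]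
  beta_reduce
  rw [MeasureTheory.integral_fintype_prod_volume_eq_prod
      (fun i => Set.indicator (Set.Ioi (0:ℝ)) (g i))]
  exact Finset.prod_congr rfl fun i _ => integral_indicator measurableSet_Ioi

open Equiv in
lemma perm_fix_pair {α : Type*} [DecidableEq α] {a b : α} (hab : a ≠ b) (π : Equiv.Perm α)
    (h : ∀ i, i ≠ a → i ≠ b → π i = i) : π = 1 ∨ π = Equiv.swap a b := by
  by_cases ha : π a = a
  · left
    have hb : π b = b := by
      by_cases hba : π b = a
      · exact absurd (π.injective (hba.trans ha.symm)) (Ne.symm hab)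
      · by_contra hbb
        exact hbb (π.injective (h (π b) hba hbb))
    ext i
    by_cases hia : i = a
    · simp [hia, ha]
    by_cases hib : i = b
    · simp [hib, hb]
    simp [h i hia hib]
  · right
    have hpa : π a = b := by
      by_cases hpb : π a = b
      · exact hpb
      · exact absurd (π.injective (h (π a) ha hpb)) ha
    have hpb : π b = a := by
      by_cases h1 : π b = b
      · exact absurd (π.injective (hpa.trans h1.symm)) hab
      by_cases h2 : π b = a
      · exact h2
      · exact absurd (π.injective (h (π b) h2 h1)) h1
    ext i
    by_cases hia : i = a
    · simp [hia, hpa, Equiv.swap_apply_left]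
    by_cases hib : i = b
    · simp [hib, hpb, Equiv.swap_apply_right]
    · rw [Equiv.swap_apply_of_ne_of_ne hia hib, h i hia hib]

lemma Ikl_symm (k l : ℕ) (β : ℝ) :
    (∫ q in Set.Ioi (0:ℝ), Real.exp (-q) * q ^ β * laguerre k q * laguerre l q)
      = ∫ q in Set.Ioi (0:ℝ), Real.exp (-q) * q ^ β * laguerre l q * laguerre k q := by
  congr 1
  funext q
  ring

open MeasureTheory in
lemma Ikl_sqrt (k l : ℕ) : Ikl k l (1/2)
    = ∫ x in Set.Ioi (0:ℝ), Real.sqrt x * (Real.exp (-x) * laguerre k x * laguerre l x) := by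
  rw [Ikl]
  refine setIntegral_congr_fun measurableSet_Ioi fun x hx => ?_
  rw [Real.sqrt_eq_rpow]
  ring

lemma Ikl_comm (k l : ℕ) : Ikl k l (1/2) = Ikl l k (1/2) := by
  rw [Ikl, Ikl, Ikl_symm]

section Pair

open MeasureTheory Equiv Set

variable {μ : ℕ} (a b : Fin μ)

/-- the one-dimensional factor functions -/
noncomputable def gf (σ τ : Equiv.Perm (Fin μ)) (i : Fin μ) : ℝ → ℝ :=
  fun x => (if i = a ∨ i = b then Real.sqrt x else 1) *
    (Real.exp (-x) * laguerre ((σ i : Fin μ) : ℕ) x * laguerre ((τ i : Fin μ) : ℕ) x)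

lemma gf_intOn (σ τ : Equiv.Perm (Fin μ)) (i : Fin μ) :
    IntegrableOn (gf a b σ τ i) (Set.Ioi (0:ℝ)) := by
  by_cases hi : i = a ∨ i = b
  · refine (integrableOn_B ((σ i : Fin μ) : ℕ) ((τ i : Fin μ) : ℕ)).congr_fun
      (fun x _ => ?_) measurableSet_Ioi
    simp [gf, if_pos hi]
  · refine (integrableOn_A ((σ i : Fin μ) : ℕ) ((τ i : Fin μ) : ℕ)).congr_fun
      (fun x _ => ?_) measurableSet_Ioi
    simp [gf, if_neg hi]

/-- value of the individual one-dimensional integrals -/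
noncomputable def vf (σ τ : Equiv.Perm (Fin μ)) (i : Fin μ) : ℝ :=
  if i = a ∨ i = b then Ikl ((σ i : Fin μ) : ℕ) ((τ i : Fin μ) : ℕ) (1/2)
  else (if σ i = τ i then 1 else 0)

lemma gf_integral (σ τ : Equiv.Perm (Fin μ)) (i : Fin μ) :
    ∫ x in Set.Ioi (0:ℝ), gf a b σ τ i x = vf a b σ τ i := by
  by_cases hi : i = a ∨ i = b
  · rw [vf, if_pos hi, Ikl_sqrt]
    refine setIntegral_congr_fun measurableSet_Ioi fun x hx => ?_
    rw [gf, if_pos hi]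
  · rw [vf, if_neg hi]
    have : ∀ x, gf a b σ τ i x
        = Real.exp (-x) * laguerre ((σ i : Fin μ) : ℕ) x * laguerre ((τ i : Fin μ) : ℕ) x := by
      intro x; rw [gf, if_neg hi, one_mul]
    rw [setIntegral_congr_fun measurableSet_Ioi (fun x _ => this x), lag_orth]
    simp [Fin.val_inj]

lemma pointwise_key (hab : a ≠ b) (σ τ : Equiv.Perm (Fin μ)) (q : Fin μ → ℝ)
    (hq : ∀ i, 0 < q i) :
    Real.sqrt (q a * q b) * ((∏ i, laguerre ((σ i : Fin μ) : ℕ) (q i))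
        * (∏ i, laguerre ((τ i : Fin μ) : ℕ) (q i))) * Real.exp (-∑ m, q m)
      = ∏ i, gf a b σ τ i (q i) := by
  have h1 : ∏ i, gf a b σ τ i (q i)
      = (∏ i, (if i = a ∨ i = b then Real.sqrt (q i) else 1))
        * ((∏ i, Real.exp (-(q i))) * (∏ i, laguerre ((σ i : Fin μ) : ℕ) (q i))
          * (∏ i, laguerre ((τ i : Fin μ) : ℕ) (q i))) := by
    rw [← Finset.prod_mul_distrib, ← Finset.prod_mul_distrib, ← Finset.prod_mul_distrib]
    rfl
  have h2 : ∏ i, (if i = a ∨ i = b then Real.sqrt (q i) else 1)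
      = Real.sqrt (q a) * Real.sqrt (q b) := by
    rw [← Finset.mul_prod_erase _ _ (Finset.mem_univ a)]
    have hbmem : b ∈ Finset.univ.erase a := Finset.mem_erase.mpr ⟨Ne.symm hab, Finset.mem_univ b⟩
    rw [← Finset.mul_prod_erase _ _ hbmem, if_pos (Or.inl rfl), if_pos (Or.inr rfl)]
    rw [Finset.prod_eq_one, mul_one]
    intro i hi
    have hib : i ≠ b := (Finset.mem_erase.mp hi).1
    have hia : i ≠ a := (Finset.mem_erase.mp (Finset.mem_erase.mp hi).2).1
    rw [if_neg (by tauto)]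
  have h3 : ∏ i, Real.exp (-(q i)) = Real.exp (-∑ m, q m) := by
    rw [← Real.exp_sum]
    congr 1
    rw [← Finset.sum_neg_distrib]
  have h4 : Real.sqrt (q a * q b) = Real.sqrt (q a) * Real.sqrt (q b) :=
    Real.sqrt_mul (hq a).le _
  rw [h1, h2, h3, h4]
  ring

lemma pair_pointwise (hab : a ≠ b) : Set.EqOn
    (fun q : Fin μ → ℝ => Real.sqrt (q a * q b) * (∏ i, ∏ j ∈ Finset.Ioi i, (q i - q j)^2)
      * Real.exp (-∑ m, q m))
    (fun q => (∏ j : Fin μ, (((j:ℕ).factorial : ℝ))^2)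
      * ∑ σ : Equiv.Perm (Fin μ), ∑ τ : Equiv.Perm (Fin μ),
        (((Equiv.Perm.sign σ : ℤ) : ℝ) * ((Equiv.Perm.sign τ : ℤ) : ℝ))
          * ∏ i, gf a b σ τ i (q i))
    {q : Fin μ → ℝ | ∀ i, 0 < q i} := by
  intro q hq
  simp only [Set.mem_setOf_eq] at hq
  simp only []
  rw [vandermonde_sq q, Lmat_det_expand, sq, Finset.sum_mul_sum]
  simp only [Finset.mul_sum, Finset.sum_mul]
  refine Finset.sum_congr rfl fun σ _ => Finset.sum_congr rfl fun τ _ => ?_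
  have hkey := pointwise_key a b hab σ τ q hq
  set K := ∏ j : Fin μ, (((j:ℕ).factorial : ℝ))^2
  set eσ := ((Equiv.Perm.sign σ : ℤ) : ℝ)
  set eτ := ((Equiv.Perm.sign τ : ℤ) : ℝ)
  linear_combination (K * eσ * eτ) * hkey

end Pair

section Pair2

open MeasureTheory Equiv Set

variable {μ : ℕ} (a b : Fin μ)

lemma pair_term_integrable (σ τ : Equiv.Perm (Fin μ)) (c : ℝ) :
    IntegrableOn (fun q : Fin μ → ℝ => c * ∏ i, gf a b σ τ i (q i))
      {q : Fin μ → ℝ | ∀ i, 0 < q i} :=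
  (integrableOn_prod_orthant μ _ (gf_intOn a b σ τ)).const_mul c

lemma pair_integrable (hab : a ≠ b) :
    IntegrableOn (fun q : Fin μ → ℝ => Real.sqrt (q a * q b)
      * (∏ i, ∏ j ∈ Finset.Ioi i, (q i - q j)^2) * Real.exp (-∑ m, q m))
      {q : Fin μ → ℝ | ∀ i, 0 < q i} := by
  have h : IntegrableOn (fun q : Fin μ → ℝ => (∏ j : Fin μ, (((j:ℕ).factorial : ℝ))^2)
      * ∑ σ : Equiv.Perm (Fin μ), ∑ τ : Equiv.Perm (Fin μ),
        (((Equiv.Perm.sign σ : ℤ) : ℝ) * ((Equiv.Perm.sign τ : ℤ) : ℝ))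
          * ∏ i, gf a b σ τ i (q i)) {q : Fin μ → ℝ | ∀ i, 0 < q i} := by
    refine Integrable.const_mul ?_ _
    exact integrable_finset_sum _ fun σ _ => integrable_finset_sum _ fun τ _ =>
      pair_term_integrable a b σ τ _
  exact h.congr_fun (pair_pointwise a b hab).symm (orthant_measurable μ)

lemma pair_integral_step1 (hab : a ≠ b) :
    ∫ q in {q : Fin μ → ℝ | ∀ i, 0 < q i}, Real.sqrt (q a * q b)
        * (∏ i, ∏ j ∈ Finset.Ioi i, (q i - q j)^2) * Real.exp (-∑ m, q m)
      = (∏ j : Fin μ, (((j:ℕ).factorial : ℝ))^2)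
        * ∑ σ : Equiv.Perm (Fin μ), ∑ τ : Equiv.Perm (Fin μ),
          (((Equiv.Perm.sign σ : ℤ) : ℝ) * ((Equiv.Perm.sign τ : ℤ) : ℝ))
            * ∏ i, vf a b σ τ i := by
  rw [setIntegral_congr_fun (orthant_measurable μ) (pair_pointwise a b hab),
    MeasureTheory.integral_const_mul]
  congr 1
  rw [integral_finset_sum _ fun σ _ => integrable_finset_sum _ fun τ _ =>
    pair_term_integrable a b σ τ _]
  refine Finset.sum_congr rfl fun σ _ => ?_
  rw [integral_finset_sum _ fun τ _ => pair_term_integrable a b σ τ _]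
  refine Finset.sum_congr rfl fun τ _ => ?_
  rw [MeasureTheory.integral_const_mul, integral_prod_orthant μ _ (gf_intOn a b σ τ)]
  congr 1
  exact Finset.prod_congr rfl fun i _ => gf_integral a b σ τ i

lemma prod_vf (σ τ : Equiv.Perm (Fin μ)) (hab : a ≠ b) :
    ∏ i, vf a b σ τ i
      = Ikl ((σ a : Fin μ) : ℕ) ((τ a : Fin μ) : ℕ) (1/2)
        * Ikl ((σ b : Fin μ) : ℕ) ((τ b : Fin μ) : ℕ) (1/2)
        * (if ∀ i ∈ (Finset.univ.erase a).erase b, σ i = τ i then 1 else 0) := by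
  rw [← Finset.mul_prod_erase _ _ (Finset.mem_univ a)]
  have hbmem : b ∈ Finset.univ.erase a := Finset.mem_erase.mpr ⟨Ne.symm hab, Finset.mem_univ b⟩
  rw [← Finset.mul_prod_erase _ _ hbmem]
  have ha : vf a b σ τ a = Ikl ((σ a : Fin μ) : ℕ) ((τ a : Fin μ) : ℕ) (1/2) := by
    rw [vf, if_pos (Or.inl rfl)]
  have hb : vf a b σ τ b = Ikl ((σ b : Fin μ) : ℕ) ((τ b : Fin μ) : ℕ) (1/2) := by
    rw [vf, if_pos (Or.inr rfl)]
  have hrest : ∏ i ∈ (Finset.univ.erase a).erase b, vf a b σ τ i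
      = if ∀ i ∈ (Finset.univ.erase a).erase b, σ i = τ i then 1 else 0 := by
    have hstep : ∏ i ∈ (Finset.univ.erase a).erase b, vf a b σ τ i
        = ∏ i ∈ (Finset.univ.erase a).erase b, (if σ i = τ i then (1:ℝ) else 0) := by
      refine Finset.prod_congr rfl fun i hi => ?_
      have hib : i ≠ b := (Finset.mem_erase.mp hi).1
      have hia : i ≠ a := (Finset.mem_erase.mp (Finset.mem_erase.mp hi).2).1
      rw [vf, if_neg (by tauto)]
    rw [hstep, Finset.prod_boole]
    simp
  rw [ha, hb, hrest, mul_assoc]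

lemma tau_sum (σ : Equiv.Perm (Fin μ)) (hab : a ≠ b) :
    ∑ τ : Equiv.Perm (Fin μ),
      (((Equiv.Perm.sign σ : ℤ) : ℝ) * ((Equiv.Perm.sign τ : ℤ) : ℝ)) * ∏ i, vf a b σ τ i
    = Ikl ((σ a : Fin μ) : ℕ) ((σ a : Fin μ) : ℕ) (1/2)
        * Ikl ((σ b : Fin μ) : ℕ) ((σ b : Fin μ) : ℕ) (1/2)
      - (Ikl ((σ a : Fin μ) : ℕ) ((σ b : Fin μ) : ℕ) (1/2))^2 := by
  -- reindex τ = σ * π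
  rw [← Fintype.sum_equiv (Equiv.mulLeft σ)
    (fun π => (((Equiv.Perm.sign σ : ℤ) : ℝ) * ((Equiv.Perm.sign (σ * π) : ℤ) : ℝ))
      * ∏ i, vf a b σ (σ * π) i)
    (fun τ => (((Equiv.Perm.sign σ : ℤ) : ℝ) * ((Equiv.Perm.sign τ : ℤ) : ℝ))
      * ∏ i, vf a b σ τ i)
    (fun π => rfl)]
  -- only π = 1 and π = swap a b contribute
  have hzero : ∀ π ∈ (Finset.univ : Finset (Equiv.Perm (Fin μ))),
      π ∉ ({1, Equiv.swap a b} : Finset (Equiv.Perm (Fin μ))) →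
      (((Equiv.Perm.sign σ : ℤ) : ℝ) * ((Equiv.Perm.sign (σ * π) : ℤ) : ℝ))
        * ∏ i, vf a b σ (σ * π) i = 0 := by
    intro π _ hπ
    simp only [Finset.mem_insert, Finset.mem_singleton] at hπ
    push_neg at hπ
    have hnotall : ¬ (∀ i, i ≠ a → i ≠ b → π i = i) := by
      intro hc
      rcases perm_fix_pair hab π hc with h1 | h2
      · exact hπ.1 h1
      · exact hπ.2 h2
    push_neg at hnotall
    obtain ⟨i, hia, hib, hπi⟩ := hnotall
    rw [prod_vf a b σ (σ * π) hab]
    have hfalse : ¬ (∀ j ∈ (Finset.univ.erase a).erase b, σ j = (σ * π) j) := by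
      intro hc
      have hmem : i ∈ (Finset.univ.erase a).erase b :=
        Finset.mem_erase.mpr ⟨hib, Finset.mem_erase.mpr ⟨hia, Finset.mem_univ i⟩⟩
      have := hc i hmem
      rw [Equiv.Perm.mul_apply] at this
      exact hπi (σ.injective this.symm)
    rw [if_neg hfalse]
    ring
  rw [← Finset.sum_subset (Finset.subset_univ ({1, Equiv.swap a b} :
    Finset (Equiv.Perm (Fin μ)))) hzero]
  have h1ne : (1 : Equiv.Perm (Fin μ)) ∉ ({Equiv.swap a b} : Finset (Equiv.Perm (Fin μ))) := by
    simp only [Finset.mem_singleton]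
    intro h
    exact hab (Equiv.swap_eq_one_iff.mp h.symm)
  rw [Finset.sum_insert h1ne, Finset.sum_singleton]
  -- evaluate the two terms
  have hsgn1 : ((Equiv.Perm.sign σ : ℤ) : ℝ) * ((Equiv.Perm.sign (σ * 1) : ℤ) : ℝ) = 1 := by
    rw [mul_one]
    have : (Equiv.Perm.sign σ) * (Equiv.Perm.sign σ) = 1 := Int.units_mul_self _
    have h2 : ((Equiv.Perm.sign σ : ℤ)) * ((Equiv.Perm.sign σ : ℤ)) = 1 := by
      rw [← Units.val_mul, this, Units.val_one]
    exact_mod_cast h2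
  have hsgnswap : ((Equiv.Perm.sign σ : ℤ) : ℝ)
      * ((Equiv.Perm.sign (σ * Equiv.swap a b) : ℤ) : ℝ) = -1 := by
    rw [Equiv.Perm.sign_mul, Equiv.Perm.sign_swap hab]
    have : ((Equiv.Perm.sign σ * -1 : ℤˣ) : ℤ) = -((Equiv.Perm.sign σ : ℤ)) := by
      rw [Units.val_mul]; simp
    rw [this]
    push_cast
    have hu : (Equiv.Perm.sign σ) * (Equiv.Perm.sign σ) = 1 := Int.units_mul_self _
    have h2 : ((Equiv.Perm.sign σ : ℤ)) * ((Equiv.Perm.sign σ : ℤ)) = 1 := by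
      rw [← Units.val_mul, hu, Units.val_one]
    have h3 : ((Equiv.Perm.sign σ : ℤ) : ℝ) * ((Equiv.Perm.sign σ : ℤ) : ℝ) = 1 := by
      exact_mod_cast h2
    linear_combination -h3
  rw [prod_vf a b σ (σ * 1) hab, prod_vf a b σ (σ * Equiv.swap a b) hab]
  have e1 : ∀ i : Fin μ, (σ * 1) i = σ i := fun i => rfl
  have heq1 : (if ∀ i ∈ (Finset.univ.erase a).erase b, σ i = (σ * 1) i then 1 else 0) = (1:ℝ) := by
    rw [if_pos fun i _ => (e1 i).symm ▸ rfl]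
  have heqs : (if ∀ i ∈ (Finset.univ.erase a).erase b, σ i = (σ * Equiv.swap a b) i
      then 1 else 0) = (1:ℝ) := by
    refine if_pos fun i hi => ?_
    have hib : i ≠ b := (Finset.mem_erase.mp hi).1
    have hia : i ≠ a := (Finset.mem_erase.mp (Finset.mem_erase.mp hi).2).1
    rw [Equiv.Perm.mul_apply, Equiv.swap_apply_of_ne_of_ne hia hib]
  have hswapa : (σ * Equiv.swap a b) a = σ b := by
    rw [Equiv.Perm.mul_apply, Equiv.swap_apply_left]
  have hswapb : (σ * Equiv.swap a b) b = σ a := by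
    rw [Equiv.Perm.mul_apply, Equiv.swap_apply_right]
  rw [heq1, heqs, hswapa, hswapb, hsgn1, hsgnswap, e1 a, e1 b]
  have hcomm : Ikl ((σ b : Fin μ) : ℕ) ((σ a : Fin μ) : ℕ) (1/2)
      = Ikl ((σ a : Fin μ) : ℕ) ((σ b : Fin μ) : ℕ) (1/2) := Ikl_comm _ _
  rw [hcomm]
  ring

lemma pair_integral (hab : a ≠ b) :
    ∫ q in {q : Fin μ → ℝ | ∀ i, 0 < q i}, Real.sqrt (q a * q b)
        * (∏ i, ∏ j ∈ Finset.Ioi i, (q i - q j)^2) * Real.exp (-∑ m, q m)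
      = (∏ j : Fin μ, (((j:ℕ).factorial : ℝ))^2)
        * ∑ σ : Equiv.Perm (Fin μ),
          (Ikl ((σ a : Fin μ) : ℕ) ((σ a : Fin μ) : ℕ) (1/2)
              * Ikl ((σ b : Fin μ) : ℕ) ((σ b : Fin μ) : ℕ) (1/2)
            - (Ikl ((σ a : Fin μ) : ℕ) ((σ b : Fin μ) : ℕ) (1/2))^2) := by
  rw [pair_integral_step1 a b hab]
  congr 1
  exact Finset.sum_congr rfl fun σ _ => tau_sum a b σ hab

end Pair2

theorem orthant_integral_sqrt_pairs (μ : ℕ) (hμ : 1 ≤ μ) :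
    ∫ q in {q : Fin μ → ℝ | ∀ i, 0 < q i},
        (∑ ij ∈ Finset.univ.filter (fun ij : Fin μ × Fin μ => ij.1 ≠ ij.2),
            Real.sqrt (q ij.1 * q ij.2)) *
          (∏ i, ∏ j ∈ Finset.Ioi i, (q i - q j) ^ 2) * Real.exp (-∑ m, q m)
      = Qbar μ *
        ∑ k ∈ Finset.range μ, ∑ l ∈ Finset.range μ,
          (Ikl k k (1/2) * Ikl l l (1/2) - (Ikl k l (1/2)) ^ 2) := by
  classical
  set P : Finset (Fin μ × Fin μ) := Finset.univ.filter (fun ij : Fin μ × Fin μ => ij.1 ≠ ij.2)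
    with hP
  set K : ℝ := ∏ j : Fin μ, (((j:ℕ).factorial : ℝ))^2 with hK
  have hmem : ∀ ij ∈ P, ij.1 ≠ ij.2 := fun ij hij => (Finset.mem_filter.mp hij).2
  -- step 1: expand the sum out of the integrand
  have h1 : ∫ q in {q : Fin μ → ℝ | ∀ i, 0 < q i},
      (∑ ij ∈ P, Real.sqrt (q ij.1 * q ij.2)) *
        (∏ i, ∏ j ∈ Finset.Ioi i, (q i - q j) ^ 2) * Real.exp (-∑ m, q m)
      = ∫ q in {q : Fin μ → ℝ | ∀ i, 0 < q i},
        ∑ ij ∈ P, Real.sqrt (q ij.1 * q ij.2) *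
          (∏ i, ∏ j ∈ Finset.Ioi i, (q i - q j) ^ 2) * Real.exp (-∑ m, q m) := by
    refine setIntegral_congr_fun (orthant_measurable μ) fun q _ => ?_
    rw [Finset.sum_mul, Finset.sum_mul]
  rw [h1, integral_finset_sum (μ := volume.restrict {q : Fin μ → ℝ | ∀ i, 0 < q i}) P
    (f := fun ij (q : Fin μ → ℝ) => Real.sqrt (q ij.1 * q ij.2) *
      (∏ i, ∏ j ∈ Finset.Ioi i, (q i - q j) ^ 2) * Real.exp (-∑ m, q m))
    (fun ij hij => pair_integrable ij.1 ij.2 (hmem ij hij))]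
  have h2 : ∀ ij ∈ P,
      (∫ q in {q : Fin μ → ℝ | ∀ i, 0 < q i}, Real.sqrt (q ij.1 * q ij.2) *
        (∏ i, ∏ j ∈ Finset.Ioi i, (q i - q j) ^ 2) * Real.exp (-∑ m, q m))
      = K * ∑ σ : Equiv.Perm (Fin μ),
          (Ikl ((σ ij.1 : Fin μ) : ℕ) ((σ ij.1 : Fin μ) : ℕ) (1/2)
              * Ikl ((σ ij.2 : Fin μ) : ℕ) ((σ ij.2 : Fin μ) : ℕ) (1/2)
            - (Ikl ((σ ij.1 : Fin μ) : ℕ) ((σ ij.2 : Fin μ) : ℕ) (1/2))^2) :=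
    fun ij hij => pair_integral ij.1 ij.2 (hmem ij hij)
  rw [Finset.sum_congr rfl h2, ← Finset.mul_sum, Finset.sum_comm]
  -- reindex inner pair-sums
  have h3 : ∀ σ : Equiv.Perm (Fin μ),
      (∑ ij ∈ P, (Ikl ((σ ij.1 : Fin μ) : ℕ) ((σ ij.1 : Fin μ) : ℕ) (1/2)
          * Ikl ((σ ij.2 : Fin μ) : ℕ) ((σ ij.2 : Fin μ) : ℕ) (1/2)
        - (Ikl ((σ ij.1 : Fin μ) : ℕ) ((σ ij.2 : Fin μ) : ℕ) (1/2))^2))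
      = ∑ ij ∈ P, (Ikl ((ij.1 : Fin μ) : ℕ) ((ij.1 : Fin μ) : ℕ) (1/2)
          * Ikl ((ij.2 : Fin μ) : ℕ) ((ij.2 : Fin μ) : ℕ) (1/2)
        - (Ikl ((ij.1 : Fin μ) : ℕ) ((ij.2 : Fin μ) : ℕ) (1/2))^2) := by
    intro σ
    rw [hP, Finset.sum_filter, Finset.sum_filter]
    refine Fintype.sum_equiv (Equiv.prodCongr σ σ) _ _ fun ij => ?_
    simp only [Equiv.prodCongr_apply, Prod.map]
    refine if_congr ?_ rfl rfl
    exact (not_congr (by rw [EmbeddingLike.apply_eq_iff_eq])).symm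
  rw [Finset.sum_congr rfl (fun σ _ => h3 σ), Finset.sum_const, Finset.card_univ,
    Fintype.card_perm, Fintype.card_fin, nsmul_eq_mul]
  -- extend the pair sum to the full square
  have h4 : ∑ ij ∈ P, (Ikl ((ij.1 : Fin μ) : ℕ) ((ij.1 : Fin μ) : ℕ) (1/2)
        * Ikl ((ij.2 : Fin μ) : ℕ) ((ij.2 : Fin μ) : ℕ) (1/2)
      - (Ikl ((ij.1 : Fin μ) : ℕ) ((ij.2 : Fin μ) : ℕ) (1/2))^2)
      = ∑ ij : Fin μ × Fin μ, (Ikl ((ij.1 : Fin μ) : ℕ) ((ij.1 : Fin μ) : ℕ) (1/2)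
          * Ikl ((ij.2 : Fin μ) : ℕ) ((ij.2 : Fin μ) : ℕ) (1/2)
        - (Ikl ((ij.1 : Fin μ) : ℕ) ((ij.2 : Fin μ) : ℕ) (1/2))^2) := by
    rw [hP]
    rw [← Finset.sum_filter_add_sum_filter_not Finset.univ
      (fun ij : Fin μ × Fin μ => ij.1 ≠ ij.2)]
    have hdiag : ∑ ij ∈ Finset.univ.filter (fun ij : Fin μ × Fin μ => ¬ ij.1 ≠ ij.2),
        (Ikl ((ij.1 : Fin μ) : ℕ) ((ij.1 : Fin μ) : ℕ) (1/2)
          * Ikl ((ij.2 : Fin μ) : ℕ) ((ij.2 : Fin μ) : ℕ) (1/2)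
        - (Ikl ((ij.1 : Fin μ) : ℕ) ((ij.2 : Fin μ) : ℕ) (1/2))^2) = 0 := by
      refine Finset.sum_eq_zero fun ij hij => ?_
      have : ij.1 = ij.2 := not_not.mp (Finset.mem_filter.mp hij).2
      rw [this]
      ring
    rw [hdiag, add_zero]
  rw [h4]
  -- convert to range sums and match constants
  have h5 : ∑ ij : Fin μ × Fin μ, (Ikl ((ij.1 : Fin μ) : ℕ) ((ij.1 : Fin μ) : ℕ) (1/2)
        * Ikl ((ij.2 : Fin μ) : ℕ) ((ij.2 : Fin μ) : ℕ) (1/2)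
      - (Ikl ((ij.1 : Fin μ) : ℕ) ((ij.2 : Fin μ) : ℕ) (1/2))^2)
      = ∑ k ∈ Finset.range μ, ∑ l ∈ Finset.range μ,
          (Ikl k k (1/2) * Ikl l l (1/2) - (Ikl k l (1/2)) ^ 2) := by
    rw [Fintype.sum_prod_type]
    rw [Fin.sum_univ_eq_sum_range (fun k => ∑ l : Fin μ,
      (Ikl k k (1/2) * Ikl ((l : Fin μ) : ℕ) ((l : Fin μ) : ℕ) (1/2)
        - (Ikl k ((l : Fin μ) : ℕ) (1/2))^2))]
    refine Finset.sum_congr rfl fun k _ => ?_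
    exact Fin.sum_univ_eq_sum_range (fun l =>
      (Ikl k k (1/2) * Ikl l l (1/2) - (Ikl k l (1/2))^2)) μ
  rw [h5]
  have h6 : K * ((μ.factorial : ℝ) * ∑ k ∈ Finset.range μ, ∑ l ∈ Finset.range μ,
      (Ikl k k (1/2) * Ikl l l (1/2) - (Ikl k l (1/2)) ^ 2))
      = Qbar μ * ∑ k ∈ Finset.range μ, ∑ l ∈ Finset.range μ,
        (Ikl k k (1/2) * Ikl l l (1/2) - (Ikl k l (1/2)) ^ 2) := by
    rw [Qbar, hK]
    rw [Fin.prod_univ_eq_prod_range (fun j => ((j.factorial : ℝ))^2) μ]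
    ring
  rw [← h6]
end

section
/- ∫_0^1 Real.sqrt (x * (1 − x)) · (1 − 2 x)² dx = π / 32. Consequently, the mean negativity of a Haar-random pure state of a 2 × 2 bipartite system, ⟨N⟩ = (1/2) · 3 · ∫_0^1 2 · Real.sqrt (x (1 − x)) · (1 − 2 x)² dx, equals 3π/32, so that ⟨N⟩ / N_max = 3π/16 with N_max = 1/2. -/
open scoped BigOperators
open Real intervalIntegral

lemma sqrt_four : Real.sqrt 4 = 2 := by
  rw [show (4:ℝ) = 2^2 by norm_num, Real.sqrt_sq (by norm_num)]

lemma int1 : (∫ u in (-1:ℝ)..1, Real.sqrt (1 - u^2) * u^2) = Real.pi / 8 := by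
  calc (∫ u in (-1:ℝ)..1, Real.sqrt (1 - u^2) * u^2)
      = ∫ u in sin (-(π/2))..sin (π/2), Real.sqrt (1 - u^2) * u^2 := by
        rw [sin_neg, sin_pi_div_two]
    _ = ∫ x in (-(π/2))..(π/2), (Real.sqrt (1 - sin x^2) * sin x^2) * cos x :=
        (integral_comp_mul_deriv (fun x _ => hasDerivAt_sin x) continuousOn_cos
          (by fun_prop)).symm
    _ = ∫ x in (-(π/2))..(π/2), sin x^2 * cos x^2 := by
        refine integral_congr_ae (MeasureTheory.ae_of_all _ fun y h => ?_)
        rw [Set.uIoc_of_le (neg_le_self (le_of_lt (half_pos Real.pi_pos))), Set.mem_Ioc] at h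
        rw [← Real.cos_eq_sqrt_one_sub_sin_sq (le_of_lt h.1) h.2]
        ring
    _ = Real.pi / 8 := by
        rw [integral_sin_sq_mul_cos_sq]
        have h1 : 4 * (π/2) = 2 * π := by ring
        have h2 : 4 * (-(π/2)) = -(2 * π) := by ring
        rw [h1, h2, Real.sin_neg, Real.sin_two_pi]
        ring

lemma main_int :
    (∫ x in (0:ℝ)..1, Real.sqrt (x * (1 - x)) * (1 - 2 * x) ^ 2) = Real.pi / 32 := by
  have hpt : ∀ x : ℝ, Real.sqrt (x * (1 - x)) * (1 - 2 * x) ^ 2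
      = (Real.sqrt (1 - (2 * x + -1)^2) * (2 * x + -1)^2) / 2 := by
    intro x
    have h : 1 - (2 * x + -1)^2 = 4 * (x * (1 - x)) := by ring
    have h4 : Real.sqrt (4 * (x * (1 - x))) = 2 * Real.sqrt (x * (1 - x)) := by
      rw [Real.sqrt_mul (by norm_num), sqrt_four]
    rw [h, h4]
    have : (1 - 2 * x)^2 = (2 * x + -1)^2 := by ring
    rw [this]; ring
  have := intervalIntegral.integral_comp_mul_add
    (f := fun u => Real.sqrt (1 - u^2) * u^2) (a := (0:ℝ)) (b := 1) (c := 2)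
    (by norm_num) (-1)
  simp only [hpt]
  rw [intervalIntegral.integral_div, this]
  norm_num [int1]
  ring

theorem mean_negativity_two_qubits :
    (∫ x in (0:ℝ)..1, Real.sqrt (x * (1 - x)) * (1 - 2 * x) ^ 2) = Real.pi / 32 ∧
    (1 / 2 : ℝ) * 3 * (∫ x in (0:ℝ)..1, 2 * Real.sqrt (x * (1 - x)) * (1 - 2 * x) ^ 2)
      = 3 * Real.pi / 32 ∧
    (3 * Real.pi / 32) / (1 / 2 : ℝ) = 3 * Real.pi / 16 := by
  refine ⟨main_int, ?_, by ring⟩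
  have h : (∫ x in (0:ℝ)..1, 2 * Real.sqrt (x * (1 - x)) * (1 - 2 * x) ^ 2)
      = 2 * ∫ x in (0:ℝ)..1, Real.sqrt (x * (1 - x)) * (1 - 2 * x) ^ 2 := by
    rw [← intervalIntegral.integral_const_mul]
    congr 1; ext x; ring
  rw [h, main_int]; ring
end
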